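/- arXiv:1612.08531 — 5 statements merged into one kernel-verified Lean document; each statement's English description precedes it below -/
import Mathlib

section
/- Let G be a finite simple graph and let M be a maximal matching in G. Then for every integer k with |M| ≤ k ≤ ν(G) there exists a maximal matching M' in G of size exactly k that covers every vertex covered by M. -/
open SimpleGraph

variable {V : Type*}

/-- `M` is a matching in `G`: a set of pairwise vertex-disjoint edges of `G`. -/
def IsMatchingIn (G : SimpleGraph V) (M : Finset (Sym2 V)) : Prop :=
  (∀ e ∈ M, e ∈ G.edgeSet) ∧
    ∀ e ∈ M, ∀ f ∈ M, e ≠ f → ∀ v : V, v ∈ e → v ∉ f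

/-- `M` is a maximal matching in `G`: a matching not properly contained in another matching. -/
def IsMaximalMatchingIn (G : SimpleGraph V) (M : Finset (Sym2 V)) : Prop :=
  IsMatchingIn G M ∧ ∀ M', IsMatchingIn G M' → M ⊆ M' → M' = M

/-- `M` saturates (covers) the vertex `v`. -/
def Sat (M : Finset (Sym2 V)) (v : V) : Prop := ∃ e ∈ M, v ∈ e

/-- The matching number `ν(G)`. -/
noncomputable def nuNum (G : SimpleGraph V) : ℕ :=
  sSup {n | ∃ M, IsMatchingIn G M ∧ M.card = n}

/-- The minimum maximal matching number `β(G)`. -/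
noncomputable def betaNum (G : SimpleGraph V) : ℕ :=
  sInf {n | ∃ M, IsMaximalMatchingIn G M ∧ M.card = n}

/-- The matching gap `μ(G) = ν(G) - β(G)`. -/
noncomputable def muGap (G : SimpleGraph V) : ℕ := nuNum G - betaNum G

section Aux

variable {G : SimpleGraph V}

lemma IsMatchingIn.subset' {M M' : Finset (Sym2 V)} (h : IsMatchingIn G M) (hsub : M' ⊆ M) :
    IsMatchingIn G M' :=
  ⟨fun e he => h.1 e (hsub he), fun e he f hf hef v hv => h.2 e (hsub he) f (hsub hf) hef v hv⟩

lemma sat_erase_mono [DecidableEq V] {M : Finset (Sym2 V)} {f : Sym2 V} {v : V}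
    (h : Sat (M.erase f) v) : Sat M v := by
  obtain ⟨g, hg, hvg⟩ := h
  exact ⟨g, Finset.mem_of_mem_erase hg, hvg⟩

/-- In a matching, a vertex of an edge `f` is not saturated by the rest. -/
lemma not_sat_erase {M : Finset (Sym2 V)} (hM : IsMatchingIn G M) {f : Sym2 V}
    (hf : f ∈ M) {v : V} (hv : v ∈ f) [DecidableEq (Sym2 V)] : ¬ Sat (M.erase f) v := by
  rintro ⟨g, hg, hvg⟩
  exact hM.2 f hf g (Finset.mem_of_mem_erase hg) (Ne.symm (Finset.ne_of_mem_erase hg)) v hv hvg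

/-- Inserting an edge whose endpoints are unsaturated keeps being a matching. -/
lemma insert_matching [DecidableEq (Sym2 V)] {K : Finset (Sym2 V)} (hK : IsMatchingIn G K)
    {e : Sym2 V} (he : e ∈ G.edgeSet) (hfree : ∀ v ∈ e, ¬ Sat K v) :
    IsMatchingIn G (insert e K) ∧ (insert e K).card = K.card + 1 ∧ e ∉ K := by
  have heK : e ∉ K := fun h => hfree e.out.1 (Sym2.out_fst_mem e) ⟨e, h, Sym2.out_fst_mem e⟩
  refine ⟨⟨?_, ?_⟩, Finset.card_insert_of_notMem heK, heK⟩
  · intro g hg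
    rcases Finset.mem_insert.mp hg with rfl | hg
    · exact he
    · exact hK.1 g hg
  · intro f hf g hg hfg v hvf
    rcases Finset.mem_insert.mp hf with h1 | h1 <;> rcases Finset.mem_insert.mp hg with h2 | h2
    · exact absurd (h1.trans h2.symm) hfg
    · exact fun hvg => hfree v (h1 ▸ hvf) ⟨g, h2, hvg⟩
    · exact fun hvg => hfree v (h2 ▸ hvg) ⟨f, h1, hvf⟩
    · exact hK.2 f h1 g h2 hfg v hvf

/-- The finset of vertices of an edge. -/
noncomputable def evs [DecidableEq V] (e : Sym2 V) : Finset V :=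
  {e.out.1, Sym2.Mem.other (Sym2.out_fst_mem e)}

lemma mem_evs [DecidableEq V] {e : Sym2 V} {v : V} : v ∈ evs e ↔ v ∈ e := by
  have hs := Sym2.other_spec (Sym2.out_fst_mem e)
  constructor
  · intro hv
    rcases Finset.mem_insert.mp hv with rfl | hv
    · exact Sym2.out_fst_mem e
    · rw [Finset.mem_singleton] at hv
      subst hv
      exact Sym2.other_mem _
  · intro hv
    rw [← hs, Sym2.mem_iff] at hv
    rcases hv with rfl | rfl
    · exact Finset.mem_insert_self _ _
    · exact Finset.mem_insert_of_mem (Finset.mem_singleton_self _)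

lemma card_evs [DecidableEq V] {e : Sym2 V} (hd : ¬ e.IsDiag) : (evs e).card = 2 :=
  Finset.card_pair (Sym2.other_ne hd (Sym2.out_fst_mem e)).symm

lemma satFinset_card [DecidableEq V] {K : Finset (Sym2 V)} (hK : IsMatchingIn G K) :
    (K.biUnion evs).card = 2 * K.card := by
  rw [Finset.card_biUnion]
  · rw [Finset.sum_congr rfl (fun e he => card_evs (G.not_isDiag_of_mem_edgeSet (hK.1 e he))),
      Finset.sum_const, smul_eq_mul, mul_comm]
  · intro e he f hf hef
    rw [Function.onFun, Finset.disjoint_left]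
    intro v hve hvf
    exact hK.2 e he f hf hef v (mem_evs.mp hve) (mem_evs.mp hvf)

lemma card_le_of_sat_subset {M N : Finset (Sym2 V)} (hM : IsMatchingIn G M)
    (hN : IsMatchingIn G N) (h : ∀ v, Sat N v → Sat M v) : N.card ≤ M.card := by
  classical
  have hsub : N.biUnion evs ⊆ M.biUnion evs := by
    intro v hv
    rw [Finset.mem_biUnion] at hv ⊢
    obtain ⟨e, he, hve⟩ := hv
    obtain ⟨f, hf, hvf⟩ := h v ⟨e, he, mem_evs.mp hve⟩
    exact ⟨f, hf, mem_evs.mpr hvf⟩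
  have := Finset.card_le_card hsub
  rw [satFinset_card hM, satFinset_card hN] at this
  omega

lemma exists_unsat {M N : Finset (Sym2 V)} (hM : IsMatchingIn G M) (hN : IsMatchingIn G N)
    (h : M.card < N.card) : ∃ x, Sat N x ∧ ¬ Sat M x := by
  by_contra hc
  push_neg at hc
  exact absurd (card_le_of_sat_subset hM hN hc) (by omega)

/-- The key augmenting lemma: a matching can be grown by one edge while keeping all
saturated vertices saturated, given a strictly larger matching. -/
lemma aug (G : SimpleGraph V) (n : ℕ) : ∀ (M N : Finset (Sym2 V)), M.card ≤ n →
    IsMatchingIn G M → IsMatchingIn G N → M.card < N.card →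
    ∃ M', IsMatchingIn G M' ∧ M'.card = M.card + 1 ∧
      (∀ v, Sat M v → Sat M' v) ∧ (∀ v, Sat M' v → Sat M v ∨ Sat N v) := by
  classical
  induction n with
  | zero =>
    intro M N hn hM hN hlt
    have hM0 : M = ∅ := Finset.card_eq_zero.mp (Nat.le_zero.mp hn)
    subst hM0
    obtain ⟨e, he⟩ := Finset.card_pos.mp (by omega : 0 < N.card)
    have hfree : ∀ v ∈ e, ¬ Sat (∅ : Finset (Sym2 V)) v := by
      rintro v _ ⟨g, hg, _⟩
      exact absurd hg (Finset.notMem_empty g)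
    obtain ⟨hm, hc, _⟩ := insert_matching hM (hN.1 e he) hfree
    refine ⟨insert e ∅, hm, by simp, ?_, ?_⟩
    · rintro v ⟨g, hg, _⟩
      exact absurd hg (Finset.notMem_empty g)
    · rintro v ⟨g, hg, hvg⟩
      rcases Finset.mem_insert.mp hg with rfl | hg
      · exact Or.inr ⟨g, he, hvg⟩
      · exact absurd hg (Finset.notMem_empty g)
  | succ n ih =>
    intro M N hn hM hN hlt
    by_cases hc1 : ∃ e ∈ N, ∀ v ∈ e, ¬ Sat M v
    · -- add a free edge of N directly
      obtain ⟨e, heN, hfree⟩ := hc1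
      obtain ⟨hm, hc, _⟩ := insert_matching hM (hN.1 e heN) hfree
      refine ⟨insert e M, hm, hc, ?_, ?_⟩
      · rintro v ⟨g, hg, hvg⟩
        exact ⟨g, Finset.mem_insert_of_mem hg, hvg⟩
      · rintro v ⟨g, hg, hvg⟩
        rcases Finset.mem_insert.mp hg with rfl | hg
        · exact Or.inr ⟨g, heN, hvg⟩
        · exact Or.inl ⟨g, hg, hvg⟩
    · push_neg at hc1
      by_cases h2a : ∃ e, e ∈ M ∧ e ∈ N
      · -- common edge: remove it, recurse, reinsert
        obtain ⟨e, heM, heN⟩ := h2a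
        have hcM : (M.erase e).card = M.card - 1 := Finset.card_erase_of_mem heM
        have hcN : (N.erase e).card = N.card - 1 := Finset.card_erase_of_mem heN
        have hM1 : 1 ≤ M.card := Finset.card_pos.mpr ⟨e, heM⟩
        obtain ⟨M₂, hM₂, hcard₂, hsat₁, hsat₂⟩ :=
          ih (M.erase e) (N.erase e) (by omega) (hM.subset' (Finset.erase_subset _ _))
            (hN.subset' (Finset.erase_subset _ _)) (by omega)
        have hde : ∀ v ∈ e, ¬ Sat M₂ v := by
          intro v hv hs
          rcases hsat₂ v hs with h | h
          · exact not_sat_erase hM heM hv h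
          · exact not_sat_erase hN heN hv h
        obtain ⟨hm, hc, _⟩ := insert_matching hM₂ (hM.1 e heM) hde
        refine ⟨insert e M₂, hm, by omega, ?_, ?_⟩
        · rintro v ⟨g, hg, hvg⟩
          by_cases hge : g = e
          · subst hge; exact ⟨g, Finset.mem_insert_self _ _, hvg⟩
          · obtain ⟨f, hf, hvf⟩ := hsat₁ v ⟨g, Finset.mem_erase.mpr ⟨hge, hg⟩, hvg⟩
            exact ⟨f, Finset.mem_insert_of_mem hf, hvf⟩
        · rintro v ⟨g, hg, hvg⟩
          rcases Finset.mem_insert.mp hg with rfl | hg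
          · exact Or.inl ⟨g, heM, hvg⟩
          · rcases hsat₂ v ⟨g, hg, hvg⟩ with h | h
            · exact Or.inl (sat_erase_mono h)
            · exact Or.inr (sat_erase_mono h)
      · -- disjoint case: find an exposed vertex and build the alternating step
        push_neg at h2a
        obtain ⟨x, hxN, hxM⟩ := exists_unsat hM hN hlt
        obtain ⟨e, heN, hxe⟩ := hxN
        obtain ⟨y, hye, hySat⟩ := hc1 e heN
        have hxy : x ≠ y := fun h => hxM (h ▸ hySat)
        obtain ⟨f, hfM, hyf⟩ := hySat
        have hfe : f ≠ e := fun h => h2a f hfM (h ▸ heN)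
        -- e = s(x,y)
        have heq : e = s(x, y) := ((Sym2.mem_and_mem_iff hxy).mp ⟨hxe, hye⟩)
        -- f = s(y, z)
        set z := Sym2.Mem.other hyf with hz
        have hzf : z ∈ f := Sym2.other_mem hyf
        have hzy : z ≠ y := Sym2.other_ne (G.not_isDiag_of_mem_edgeSet (hM.1 f hfM)) hyf
        have hfeq : f = s(y, z) := (Sym2.other_spec hyf).symm
        have hcM : (M.erase f).card = M.card - 1 := Finset.card_erase_of_mem hfM
        have hcN : (N.erase e).card = N.card - 1 := Finset.card_erase_of_mem heN
        have hM1 : 1 ≤ M.card := Finset.card_pos.mpr ⟨f, hfM⟩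
        obtain ⟨M₂, hM₂, hcard₂, hsat₁, hsat₂⟩ :=
          ih (M.erase f) (N.erase e) (by omega) (hM.subset' (Finset.erase_subset _ _))
            (hN.subset' (Finset.erase_subset _ _)) (by omega)
        have hxM₂ : ¬ Sat M₂ x := by
          intro hs
          rcases hsat₂ x hs with h | h
          · exact hxM (sat_erase_mono h)
          · exact not_sat_erase hN heN hxe h
        have hyM₂ : ¬ Sat M₂ y := by
          intro hs
          rcases hsat₂ y hs with h | h
          · exact not_sat_erase hM hfM hyf h
          · exact not_sat_erase hN heN hye h
        by_cases hzM₂ : Sat M₂ z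
        · -- insert e
          have hde : ∀ v ∈ e, ¬ Sat M₂ v := by
            intro v hv
            rw [heq, Sym2.mem_iff] at hv
            rcases hv with rfl | rfl
            · exact hxM₂
            · exact hyM₂
          obtain ⟨hm, hc, _⟩ := insert_matching hM₂ (hN.1 e heN) hde
          refine ⟨insert e M₂, hm, by omega, ?_, ?_⟩
          · rintro v ⟨g, hg, hvg⟩
            by_cases hgf : g = f
            · subst hgf
              rw [hfeq, Sym2.mem_iff] at hvg
              rcases hvg with rfl | rfl
              · exact ⟨e, Finset.mem_insert_self _ _, hye⟩
              · obtain ⟨g', hg', hvg'⟩ := hzM₂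
                exact ⟨g', Finset.mem_insert_of_mem hg', hvg'⟩
            · obtain ⟨g', hg', hvg'⟩ := hsat₁ v ⟨g, Finset.mem_erase.mpr ⟨hgf, hg⟩, hvg⟩
              exact ⟨g', Finset.mem_insert_of_mem hg', hvg'⟩
          · rintro v ⟨g, hg, hvg⟩
            rcases Finset.mem_insert.mp hg with rfl | hg
            · exact Or.inr ⟨g, heN, hvg⟩
            · rcases hsat₂ v ⟨g, hg, hvg⟩ with h | h
              · exact Or.inl (sat_erase_mono h)
              · exact Or.inr (sat_erase_mono h)
        · -- insert f back
          have hde : ∀ v ∈ f, ¬ Sat M₂ v := by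
            intro v hv
            rw [hfeq, Sym2.mem_iff] at hv
            rcases hv with rfl | rfl
            · exact hyM₂
            · exact hzM₂
          obtain ⟨hm, hc, _⟩ := insert_matching hM₂ (hM.1 f hfM) hde
          refine ⟨insert f M₂, hm, by omega, ?_, ?_⟩
          · rintro v ⟨g, hg, hvg⟩
            by_cases hgf : g = f
            · subst hgf
              exact ⟨g, Finset.mem_insert_self _ _, hvg⟩
            · obtain ⟨g', hg', hvg'⟩ := hsat₁ v ⟨g, Finset.mem_erase.mpr ⟨hgf, hg⟩, hvg⟩
              exact ⟨g', Finset.mem_insert_of_mem hg', hvg'⟩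
          · rintro v ⟨g, hg, hvg⟩
            rcases Finset.mem_insert.mp hg with rfl | hg
            · exact Or.inl ⟨g, hfM, hvg⟩
            · rcases hsat₂ v ⟨g, hg, hvg⟩ with h | h
              · exact Or.inl (sat_erase_mono h)
              · exact Or.inr (sat_erase_mono h)

/-- A matching saturating all the vertices of a maximal matching is itself maximal. -/
lemma maximal_of_sat {M M' : Finset (Sym2 V)} (hM : IsMaximalMatchingIn G M)
    (hM' : IsMatchingIn G M') (hsat : ∀ v, Sat M v → Sat M' v) :
    IsMaximalMatchingIn G M' := by
  classical
  refine ⟨hM', fun K hK hsub => ?_⟩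
  refine Finset.Subset.antisymm (fun e heK => ?_) hsub
  by_contra heM'
  have hfree : ∀ v ∈ e, ¬ Sat M' v := by
    rintro v hv ⟨f, hf, hvf⟩
    exact hK.2 e heK f (hsub hf) (fun h => heM' (h ▸ hf)) v hv hvf
  have hfreeM : ∀ v ∈ e, ¬ Sat M v := fun v hv hs => hfree v hv (hsat v hs)
  obtain ⟨hmatch, _, heM⟩ := insert_matching hM.1 (hK.1 e heK) hfreeM
  have heq := hM.2 (insert e M) hmatch (Finset.subset_insert _ _)
  exact heM (heq ▸ Finset.mem_insert_self e M)

lemma empty_matching (G : SimpleGraph V) : IsMatchingIn G (∅ : Finset (Sym2 V)) :=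
  ⟨fun e he => absurd he (Finset.notMem_empty e),
   fun e he => absurd he (Finset.notMem_empty e)⟩

lemma nu_attained [Fintype V] (G : SimpleGraph V) :
    ∃ N, IsMatchingIn G N ∧ N.card = nuNum G := by
  classical
  haveI : Fintype (Sym2 V) := Fintype.ofFinite _
  have hbdd : BddAbove {n | ∃ M, IsMatchingIn G M ∧ M.card = n} := by
    refine ⟨Fintype.card (Sym2 V), ?_⟩
    rintro n ⟨M, _, rfl⟩
    simpa using Finset.card_le_univ M
  have hne : {n | ∃ M, IsMatchingIn G M ∧ M.card = n}.Nonempty :=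
    ⟨0, ∅, empty_matching G, Finset.card_empty⟩
  obtain ⟨N, hN, hcard⟩ := Nat.sSup_mem hne hbdd
  exact ⟨N, hN, hcard⟩

end Aux

theorem stmt_0 {V : Type*} [Fintype V] (G : SimpleGraph V) (M : Finset (Sym2 V))
    (hM : IsMaximalMatchingIn G M) (k : ℕ) (hk₁ : M.card ≤ k) (hk₂ : k ≤ nuNum G) :
    ∃ M' : Finset (Sym2 V), IsMaximalMatchingIn G M' ∧ M'.card = k ∧
      ∀ v : V, Sat M v → Sat M' v := by
  have main : ∀ j : ℕ, M.card + j ≤ nuNum G →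
      ∃ M', IsMaximalMatchingIn G M' ∧ M'.card = M.card + j ∧
        ∀ v : V, Sat M v → Sat M' v := by
    intro j
    induction j with
    | zero => exact fun _ => ⟨M, hM, by omega, fun v hv => hv⟩
    | succ j ih =>
      intro hj
      obtain ⟨M₁, hM₁, hcard₁, hsat₁⟩ := ih (by omega)
      obtain ⟨N, hN, hNcard⟩ := nu_attained G
      have hlt : M₁.card < N.card := by omega
      obtain ⟨M₂, hM₂, hcard₂, hsat₂, _⟩ :=
        aug G M₁.card M₁ N le_rfl hM₁.1 hN hlt
      exact ⟨M₂, maximal_of_sat hM₁ hM₂ hsat₂, by omega,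
        fun v hv => hsat₂ v (hsat₁ v hv)⟩
  obtain ⟨M', h₁, h₂, h₃⟩ := main (k - M.card) (by omega)
  exact ⟨M', h₁, by omega, h₃⟩
end

section
/- Let G be a finite simple graph and let k be an integer with β(G) ≤ k ≤ ν(G). Then G has a maximal matching of size exactly k. -/
open SimpleGraph

variable {V : Type*}

lemma matchingIn_subset {G : SimpleGraph V} {M M' : Finset (Sym2 V)}
    (h : IsMatchingIn G M) (hs : M' ⊆ M) : IsMatchingIn G M' :=
  ⟨fun e he => h.1 e (hs he), fun e he f hf hef v hv => h.2 e (hs he) f (hs hf) hef v hv⟩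

lemma matchingIn_empty {G : SimpleGraph V} : IsMatchingIn G (∅ : Finset (Sym2 V)) := by
  constructor <;> simp

lemma dominates_of_maximal {G : SimpleGraph V} {M : Finset (Sym2 V)}
    (h : IsMaximalMatchingIn G M) : ∀ e ∈ G.edgeSet, ∃ v ∈ e, Sat M v := by
  classical
  intro e he
  by_contra hcon
  push_neg at hcon
  have heM : e ∉ M := by
    induction e with
    | _ a b =>
      intro habM
      exact hcon a (Sym2.mem_mk_left a b) ⟨_, habM, Sym2.mem_mk_left a b⟩
  have hmatch : IsMatchingIn G (insert e M) := by
    refine ⟨fun f hf => ?_, fun f hf g hg hfg v hvf hvg => ?_⟩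
    · rcases Finset.mem_insert.mp hf with rfl | hf
      · exact he
      · exact h.1.1 f hf
    · rcases Finset.mem_insert.mp hf with h1 | h1
      · rcases Finset.mem_insert.mp hg with h2 | h2
        · exact hfg (h1.trans h2.symm)
        · exact hcon v (h1 ▸ hvf) ⟨g, h2, hvg⟩
      · rcases Finset.mem_insert.mp hg with h2 | h2
        · exact hcon v (h2 ▸ hvg) ⟨f, h1, hvf⟩
        · exact h.1.2 f h1 g h2 hfg v hvf hvg
  have := h.2 (insert e M) hmatch (Finset.subset_insert e M)
  exact heM (this ▸ Finset.mem_insert_self e M)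

lemma maximal_of_dominates {G : SimpleGraph V} {M : Finset (Sym2 V)}
    (hM : IsMatchingIn G M) (hdom : ∀ e ∈ G.edgeSet, ∃ v ∈ e, Sat M v) :
    IsMaximalMatchingIn G M := by
  refine ⟨hM, fun M' hM' hsub => ?_⟩
  by_contra hne
  obtain ⟨e, heM', heM⟩ := Finset.exists_of_ssubset (lt_of_le_of_ne hsub (Ne.symm hne))
  obtain ⟨v, hve, f, hfM, hvf⟩ := hdom e (hM'.1 e heM')
  have hef : e ≠ f := fun h => heM (h ▸ hfM)
  exact hM'.2 e heM' f (hsub hfM) hef v hve hvf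

lemma exchange [Fintype V] {G : SimpleGraph V} {M N : Finset (Sym2 V)}
    (hM : IsMatchingIn G M) (hN : IsMatchingIn G N) (hcard : N.card = M.card + 1) :
    ∃ M', IsMatchingIn G M' ∧ M'.card = M.card + 1 ∧ ∀ v, Sat M v → Sat M' v := by
  classical
  set S : Set ℕ := {j | ∃ P, (IsMatchingIn G P ∧ P.card = M.card + 1) ∧ (P ∩ M).card = j} with hS
  have hSne : S.Nonempty := ⟨_, N, ⟨hN, hcard⟩, rfl⟩
  have hSbdd : BddAbove S := by
    refine ⟨M.card, ?_⟩
    rintro j ⟨P, _, rfl⟩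
    exact Finset.card_le_card Finset.inter_subset_right
  obtain ⟨P, ⟨hP, hPcard⟩, hPmax⟩ := Nat.sSup_mem hSne hSbdd
  refine ⟨P, hP, hPcard, ?_⟩
  by_contra hcon
  push_neg at hcon
  obtain ⟨v, ⟨f, hfM, hvf⟩, hvP⟩ := hcon
  have hvP' : ∀ e ∈ P, v ∉ e := by
    intro e he hv; exact hvP ⟨e, he, hv⟩
  obtain ⟨w, hw⟩ : ∃ w, f = s(v, w) := ⟨Sym2.Mem.other hvf, (Sym2.other_spec hvf).symm⟩
  have hwf : w ∈ f := hw ▸ Sym2.mem_mk_right v w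
  have hfP : f ∉ P := fun h => hvP' f h hvf
  -- find g ∈ P \ M such that w avoids all other edges of P
  have hgex : ∃ g ∈ P, g ∉ M ∧ ∀ e ∈ P, e ≠ g → w ∉ e := by
    by_cases hwsat : ∃ g ∈ P, w ∈ g
    · obtain ⟨g, hgP, hwg⟩ := hwsat
      have hfg : f ≠ g := fun h => hfP (h ▸ hgP)
      have hgM : g ∉ M := fun hgM => hM.2 f hfM g hgM hfg w hwf hwg
      refine ⟨g, hgP, hgM, fun e heP heg hwe => ?_⟩
      exact hP.2 e heP g hgP heg w hwe hwg
    · push_neg at hwsat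
      have : ¬ P ⊆ M := fun hsub =>
        absurd (Finset.card_le_card hsub) (by omega)
      obtain ⟨g, hgP, hgM⟩ := Finset.not_subset.mp this
      exact ⟨g, hgP, hgM, fun e heP _ => hwsat e heP⟩
  obtain ⟨g, hgP, hgM, hgw⟩ := hgex
  set Q : Finset (Sym2 V) := insert f (P.erase g) with hQ
  have hfPe : f ∉ P.erase g := fun h => hfP (Finset.mem_of_mem_erase h)
  have hQcard : Q.card = M.card + 1 := by
    rw [hQ, Finset.card_insert_of_notMem hfPe, Finset.card_erase_of_mem hgP, hPcard]
    omega
  have hQmatch : IsMatchingIn G Q := by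
    refine ⟨fun e he => ?_, fun e he e' he' hee' u hue hue' => ?_⟩
    · rcases Finset.mem_insert.mp he with rfl | he
      · exact hM.1 e hfM
      · exact hP.1 e (Finset.mem_of_mem_erase he)
    · have he2 : e = f ∨ (e ≠ g ∧ e ∈ P) := by
        simpa [hQ, Finset.mem_insert, Finset.mem_erase] using he
      have he2' : e' = f ∨ (e' ≠ g ∧ e' ∈ P) := by
        simpa [hQ, Finset.mem_insert, Finset.mem_erase] using he'
      rcases he2 with hef | ⟨heg, heP⟩
      · rcases he2' with hef' | ⟨heg', heP'⟩
        · exact hee' (hef.trans hef'.symm)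
        · subst hef
          rcases Sym2.mem_iff.mp (hw ▸ hue) with rfl | rfl
          · exact hvP' e' heP' hue'
          · exact hgw e' heP' heg' hue'
      · rcases he2' with hef' | ⟨heg', heP'⟩
        · subst hef'
          rcases Sym2.mem_iff.mp (hw ▸ hue') with rfl | rfl
          · exact hvP' e heP hue
          · exact hgw e heP heg hue
        · exact hP.2 e heP e' heP' hee' u hue hue'
  -- intersection grows
  have hsubint : insert f (P ∩ M) ⊆ Q ∩ M := by
    intro x hx
    rcases Finset.mem_insert.mp hx with rfl | hx
    · exact Finset.mem_inter.mpr ⟨Finset.mem_insert_self _ _, hfM⟩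
    · obtain ⟨hxP, hxM⟩ := Finset.mem_inter.mp hx
      have hxg : x ≠ g := fun h => hgM (h ▸ hxM)
      exact Finset.mem_inter.mpr ⟨Finset.mem_insert_of_mem (Finset.mem_erase.mpr ⟨hxg, hxP⟩), hxM⟩
  have hfPM : f ∉ P ∩ M := fun h => hfP (Finset.mem_inter.mp h).1
  have hgrow : (P ∩ M).card + 1 ≤ (Q ∩ M).card := by
    calc (P ∩ M).card + 1 = (insert f (P ∩ M)).card := (Finset.card_insert_of_notMem hfPM).symm
    _ ≤ (Q ∩ M).card := Finset.card_le_card hsubint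
  have hle : (Q ∩ M).card ≤ sSup S := le_csSup hSbdd ⟨Q, ⟨hQmatch, hQcard⟩, rfl⟩
  omega

lemma nu_witness [Fintype V] (G : SimpleGraph V) :
    ∃ M, IsMatchingIn G M ∧ M.card = nuNum G := by
  classical
  show sSup {n | ∃ M, IsMatchingIn G M ∧ M.card = n} ∈ {n | ∃ M, IsMatchingIn G M ∧ M.card = n}
  apply Nat.sSup_mem
  · exact ⟨0, ∅, matchingIn_empty, Finset.card_empty⟩
  · exact ⟨Fintype.card (Sym2 V), by rintro j ⟨P, _, rfl⟩; exact Finset.card_le_univ P⟩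

lemma card_le_nu [Fintype V] {G : SimpleGraph V} {M : Finset (Sym2 V)}
    (hM : IsMatchingIn G M) : M.card ≤ nuNum G := by
  classical
  exact le_csSup ⟨Fintype.card (Sym2 V), by rintro j ⟨P, _, rfl⟩; exact Finset.card_le_univ P⟩
    ⟨M, hM, rfl⟩

lemma beta_witness [Fintype V] (G : SimpleGraph V) :
    ∃ M, IsMaximalMatchingIn G M ∧ M.card = betaNum G := by
  classical
  show sInf {n | ∃ M, IsMaximalMatchingIn G M ∧ M.card = n} ∈
    {n | ∃ M, IsMaximalMatchingIn G M ∧ M.card = n}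
  apply Nat.sInf_mem
  obtain ⟨N, hN, hNcard⟩ := nu_witness G
  refine ⟨N.card, N, ⟨hN, fun M' hM' hsub => ?_⟩, rfl⟩
  exact (Finset.eq_of_subset_of_card_le hsub (hNcard ▸ card_le_nu hM')).symm

theorem stmt_1 {V : Type*} [Fintype V] (G : SimpleGraph V) (k : ℕ)
    (hk₁ : betaNum G ≤ k) (hk₂ : k ≤ nuNum G) :
    ∃ M : Finset (Sym2 V), IsMaximalMatchingIn G M ∧ M.card = k := by
  classical
  obtain ⟨Nmax, hNmax, hNcard⟩ := nu_witness G
  revert hk₂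
  induction k, hk₁ using Nat.le_induction with
  | base => intro _; exact beta_witness G
  | succ n hn IH =>
    intro hs
    obtain ⟨M, hMmax, hMcard⟩ := IH (by omega)
    obtain ⟨N', hN'sub, hN'card⟩ := Finset.exists_subset_card_eq
      (show n + 1 ≤ Nmax.card by omega)
    obtain ⟨M', hM', hM'card, hM'sat⟩ := exchange hMmax.1 (matchingIn_subset hNmax hN'sub)
      (by rw [hN'card, hMcard])
    refine ⟨M', ?_, by rw [hM'card, hMcard]⟩
    refine maximal_of_dominates hM' (fun e he => ?_)
    obtain ⟨u, hue, hsat⟩ := dominates_of_maximal hMmax e he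
    exact ⟨u, hue, hM'sat u hsat⟩
end

section
/- A finite simple graph G is equimatchable if and only if G does not contain a maximal matching with an augmenting P4. -/
open SimpleGraph

variable {V : Type*}

/-- `M` has an augmenting `P₄`: a path `u w y v` on four distinct vertices with
`wy ∈ M` and `u`, `v` not saturated by `M`. -/
def HasAugP4 (G : SimpleGraph V) (M : Finset (Sym2 V)) : Prop :=
  ∃ u w y v : V, u ≠ w ∧ u ≠ y ∧ u ≠ v ∧ w ≠ y ∧ w ≠ v ∧ y ≠ v ∧
    G.Adj u w ∧ G.Adj w y ∧ G.Adj y v ∧ s(w, y) ∈ M ∧ ¬ Sat M u ∧ ¬ Sat M v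


/-- A graph is equimatchable if all its maximal matchings have the same size. -/
def Equimatchable (G : SimpleGraph V) : Prop :=
  ∀ M M' : Finset (Sym2 V), IsMaximalMatchingIn G M → IsMaximalMatchingIn G M' →
    M.card = M'.card

/-- two edges of a matching sharing a vertex are equal -/
lemma matching_unique {G : SimpleGraph V} {M : Finset (Sym2 V)} (hM : IsMatchingIn G M)
    {e f : Sym2 V} {v : V} (he : e ∈ M) (hf : f ∈ M) (hv : v ∈ e) (hv' : v ∈ f) : e = f := by
  by_contra h
  exact hM.2 e he f hf h v hv hv'

/-- an edge of `G` containing `v` has a second endpoint -/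
lemma exists_other {G : SimpleGraph V} {e : Sym2 V} {v : V}
    (he : e ∈ G.edgeSet) (hv : v ∈ e) : ∃ x, x ≠ v ∧ e = s(v, x) := by
  induction e with
  | _ a b =>
    rw [Sym2.mem_iff] at hv
    rw [mem_edgeSet] at he
    rcases hv with rfl | rfl
    · exact ⟨b, he.ne', rfl⟩
    · exact ⟨a, he.ne, Sym2.eq_swap⟩

/-- a maximal matching leaves no edge with both endpoints unsaturated -/
lemma no_free_edge {G : SimpleGraph V} {M : Finset (Sym2 V)} {a b : V}
    (hM : IsMaximalMatchingIn G M) (hadj : G.Adj a b)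
    (ha : ¬ Sat M a) (hb : ¬ Sat M b) : False := by
  classical
  have hmem : ∀ v, v ∈ s(a,b) → Sat M v → False := by
    intro v hv hs
    rw [Sym2.mem_iff] at hv
    rcases hv with rfl | rfl
    · exact ha hs
    · exact hb hs
  have hmatch : IsMatchingIn G (insert s(a,b) M) := by
    constructor
    · intro e he
      rcases Finset.mem_insert.1 he with rfl | he
      · exact hadj
      · exact hM.1.1 e he
    · intro e he f hf hef v hve hvf
      rcases Finset.mem_insert.1 he with rfl | he <;>
        rcases Finset.mem_insert.1 hf with rfl | hf
      · exact hef rfl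
      · exact hmem v hve ⟨f, hf, hvf⟩
      · exact hmem v hvf ⟨e, he, hve⟩
      · exact hM.1.2 e he f hf hef v hve hvf
  have := hM.2 _ hmatch (Finset.subset_insert _ _)
  have : s(a,b) ∈ M := this ▸ Finset.mem_insert_self _ _
  exact ha ⟨_, this, Sym2.mem_mk_left a b⟩

/-- every matching extends to a maximal matching -/
lemma extend_to_maximal [Fintype V] (G : SimpleGraph V) {M : Finset (Sym2 V)}
    (hM : IsMatchingIn G M) : ∃ M', M ⊆ M' ∧ IsMaximalMatchingIn G M' := by
  classical
  set T : Set ℕ := {n | ∃ X, IsMatchingIn G X ∧ M ⊆ X ∧ X.card = n} with hT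
  have hne : M.card ∈ T := ⟨M, hM, subset_rfl, rfl⟩
  have hbdd : BddAbove T := by
    refine ⟨Fintype.card (Sym2 V), ?_⟩
    rintro n ⟨X, _, _, rfl⟩
    exact (Finset.card_le_univ X).trans_eq (Finset.card_univ)
  obtain ⟨X, hX, hMX, hcard⟩ := Nat.sSup_mem ⟨_, hne⟩ hbdd
  refine ⟨X, hMX, hX, ?_⟩
  intro Y hY hXY
  have hYT : Y.card ∈ T := ⟨Y, hY, hMX.trans hXY, rfl⟩
  have : Y.card ≤ X.card := hcard ▸ le_csSup hbdd hYT
  exact (Finset.eq_of_subset_of_card_le hXY this).symm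

lemma supp_card [Fintype V] [DecidableEq V] (A : Finset (Sym2 V))
    (hdiag : ∀ e ∈ A, ¬ e.IsDiag)
    (hdisj : ∀ e ∈ A, ∀ f ∈ A, e ≠ f → ∀ v : V, v ∈ e → v ∉ f) :
    (Finset.univ.filter (fun v : V => ∃ e ∈ A, v ∈ e)).card = 2 * A.card := by
  classical
  induction A using Finset.induction_on with
  | empty => simp
  | @insert e A he IH =>
    induction e using Sym2.ind with
    | _ x y =>
      have hxy : x ≠ y := by
        intro h; exact hdiag _ (Finset.mem_insert_self _ _) (by simp [h])
      have hx : ¬ ∃ f ∈ A, x ∈ f := by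
        rintro ⟨f, hf, hxf⟩
        exact hdisj _ (Finset.mem_insert_self _ _) f (Finset.mem_insert_of_mem hf)
          (by rintro rfl; exact he hf) x (by simp) hxf
      have hy : ¬ ∃ f ∈ A, y ∈ f := by
        rintro ⟨f, hf, hyf⟩
        exact hdisj _ (Finset.mem_insert_self _ _) f (Finset.mem_insert_of_mem hf)
          (by rintro rfl; exact he hf) y (by simp) hyf
      have hset : (Finset.univ.filter (fun v : V => ∃ f ∈ insert s(x,y) A, v ∈ f))
          = insert x (insert y (Finset.univ.filter (fun v : V => ∃ f ∈ A, v ∈ f))) := by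
        ext v
        simp only [Finset.mem_filter, Finset.mem_univ, true_and]
        rw [Finset.mem_insert, Finset.mem_insert, Finset.mem_filter]
        constructor
        · rintro ⟨f, hf, hvf⟩
          rcases Finset.mem_insert.1 hf with rfl | hf
          · rcases Sym2.mem_iff.1 hvf with h | h
            · exact Or.inl h
            · exact Or.inr (Or.inl h)
          · exact Or.inr (Or.inr ⟨Finset.mem_univ v, f, hf, hvf⟩)
        · rintro (h | h | ⟨-, f, hf, hvf⟩)
          · exact ⟨s(x,y), Finset.mem_insert_self _ _, Sym2.mem_iff.2 (Or.inl h)⟩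
          · exact ⟨s(x,y), Finset.mem_insert_self _ _, Sym2.mem_iff.2 (Or.inr h)⟩
          · exact ⟨f, Finset.mem_insert_of_mem hf, hvf⟩
      rw [hset]
      have h1 : x ∉ insert y (Finset.univ.filter (fun v : V => ∃ f ∈ A, v ∈ f)) := by
        simp only [Finset.mem_insert, Finset.mem_filter]
        rintro (rfl | ⟨-, h⟩)
        · exact hxy rfl
        · exact hx h
      have h2 : y ∉ Finset.univ.filter (fun v : V => ∃ f ∈ A, v ∈ f) := by
        simp only [Finset.mem_filter]
        rintro ⟨-, h⟩; exact hy h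
      rw [Finset.card_insert_of_notMem h1, Finset.card_insert_of_notMem h2,
        IH (fun f hf => hdiag f (Finset.mem_insert_of_mem hf))
          (fun f hf g hg hfg => hdisj f (Finset.mem_insert_of_mem hf) g (Finset.mem_insert_of_mem hg) hfg),
        Finset.card_insert_of_notMem he]
      ring

lemma exists_sat_notsat [Fintype V] (A B : Finset (Sym2 V))
    (hAdiag : ∀ e ∈ A, ¬ e.IsDiag) (hBdiag : ∀ e ∈ B, ¬ e.IsDiag)
    (hAdisj : ∀ e ∈ A, ∀ f ∈ A, e ≠ f → ∀ v : V, v ∈ e → v ∉ f)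
    (hBdisj : ∀ e ∈ B, ∀ f ∈ B, e ≠ f → ∀ v : V, v ∈ e → v ∉ f)
    (hcard : B.card < A.card) :
    ∃ v, Sat A v ∧ ¬ Sat B v := by
  classical
  by_contra h
  push_neg at h
  have hsub : (Finset.univ.filter (fun v : V => ∃ e ∈ A, v ∈ e))
      ⊆ (Finset.univ.filter (fun v : V => ∃ e ∈ B, v ∈ e)) := by
    intro v hv
    simp only [Finset.mem_filter, Finset.mem_univ, true_and] at hv ⊢
    exact h v hv
  have := Finset.card_le_card hsub
  rw [supp_card A hAdiag hAdisj, supp_card B hBdiag hBdisj] at this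
  omega

lemma edge_endpoints {G : SimpleGraph V} {e : Sym2 V} (he : e ∈ G.edgeSet) :
    ∃ a b, G.Adj a b ∧ e = s(a, b) := by
  induction e with
  | _ a b => exact ⟨a, b, (G.mem_edgeSet).1 he, rfl⟩

lemma lemB (G : SimpleGraph V)
    (H : ¬ ∃ M : Finset (Sym2 V), IsMaximalMatchingIn G M ∧ HasAugP4 G M) :
    ∀ t, t % 2 = 1 → ∀ (M : Finset (Sym2 V)) (p : ℕ → V),
      IsMaximalMatchingIn G M →
      (∀ i ≤ t, ∀ j ≤ t, p i = p j → i = j) →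
      (∀ i < t, G.Adj (p i) (p (i+1))) →
      (∀ i < t, i % 2 = 1 → s(p i, p (i+1)) ∈ M) →
      (∀ i < t, i % 2 = 0 → s(p i, p (i+1)) ∉ M) →
      ¬ Sat M (p 0) → ¬ Sat M (p t) → False := by
  intro t
  induction t using Nat.strong_induction_on with
  | _ t IH =>
  intro ht M p hM hinj hadj hmem hnot h0 hT
  classical
  have hne : ∀ i, i ≤ t → ∀ j, j ≤ t → i ≠ j → p i ≠ p j :=
    fun i hi j hj hij h => hij (hinj i hi j hj h)
  -- case t = 1
  rcases Nat.lt_or_ge t 3 with h3 | h3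
  · have ht1 : t = 1 := by omega
    subst ht1
    exact no_free_edge hM (hadj 0 (by omega)) h0 hT
  rcases Nat.lt_or_ge t 5 with h5 | h5
  · -- case t = 3 : direct augmenting P4
    have ht3 : t = 3 := by omega
    subst ht3
    refine H ⟨M, hM, p 0, p 1, p 2, p 3,
      hne 0 (by omega) 1 (by omega) (by omega), hne 0 (by omega) 2 (by omega) (by omega),
      hne 0 (by omega) 3 (by omega) (by omega), hne 1 (by omega) 2 (by omega) (by omega),
      hne 1 (by omega) 3 (by omega) (by omega), hne 2 (by omega) 3 (by omega) (by omega),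
      hadj 0 (by omega), hadj 1 (by omega), hadj 2 (by omega),
      hmem 1 (by omega) rfl, h0, hT⟩
  -- case t ≥ 5
  obtain ⟨k, rfl⟩ : ∃ k, t = k + 2 := ⟨t - 2, by omega⟩
  have hk5 : 3 ≤ k := by omega
  have hkodd : k % 2 = 1 := by omega
  have heprevM : s(p k, p (k+1)) ∈ M := hmem k (by omega) hkodd
  have helastN : s(p (k+1), p (k+2)) ∉ M := hnot (k+1) (by omega) (by omega)
  have hsatk1 : Sat M (p (k+1)) := ⟨_, heprevM, Sym2.mem_mk_right _ _⟩
  set elast : Sym2 V := s(p (k+1), p (k+2)) with helastdef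
  set eprev : Sym2 V := s(p k, p (k+1)) with heprevdef
  set M'' : Finset (Sym2 V) := insert elast (M.erase eprev) with hM''def
  -- basic membership facts about M''
  have hsatk2'' : Sat M'' (p (k+2)) :=
    ⟨elast, Finset.mem_insert_self _ _, Sym2.mem_mk_right _ _⟩
  have hsatk1'' : Sat M'' (p (k+1)) :=
    ⟨elast, Finset.mem_insert_self _ _, Sym2.mem_mk_left _ _⟩
  -- M'' is a matching
  have hM''match : IsMatchingIn G M'' := by
    constructor
    · intro e he
      rcases Finset.mem_insert.1 he with rfl | he
      · exact hadj (k+1) (by omega)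
      · exact hM.1.1 e (Finset.mem_of_mem_erase he)
    · have key : ∀ f ∈ M.erase eprev, ∀ v, v ∈ elast → v ∉ f := by
        intro f hf v hv hvf
        rcases Sym2.mem_iff.1 hv with rfl | rfl
        · -- v = p (k+1)
          have : f = eprev := matching_unique hM.1 (Finset.mem_of_mem_erase hf) heprevM hvf
            (Sym2.mem_mk_right _ _)
          exact (Finset.ne_of_mem_erase hf) this
        · -- v = p (k+2)
          exact hT ⟨f, Finset.mem_of_mem_erase hf, hvf⟩
      intro e he f hf hef v hve hvf
      rcases Finset.mem_insert.1 he with rfl | he <;> rcases Finset.mem_insert.1 hf with rfl | hf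
      · exact hef rfl
      · exact key f hf v hve hvf
      · exact key e he v hvf hve
      · exact hM.1.2 e (Finset.mem_of_mem_erase he) f (Finset.mem_of_mem_erase hf) hef v hve hvf
  -- path properties for the truncated path of length k w.r.t. M''
  have hmem'' : ∀ i < k, i % 2 = 1 → s(p i, p (i+1)) ∈ M'' := by
    intro i hi hodd
    have hiM : s(p i, p (i+1)) ∈ M := hmem i (by omega) hodd
    have : s(p i, p (i+1)) ≠ eprev := by
      intro h
      rw [heprevdef, Sym2.eq_iff] at h
      rcases h with ⟨h1, h2⟩ | ⟨h1, h2⟩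
      · exact absurd (hinj i (by omega) k (by omega) h1) (by omega)
      · exact absurd (hinj i (by omega) (k+1) (by omega) h1) (by omega)
    exact Finset.mem_insert_of_mem (Finset.mem_erase.2 ⟨this, hiM⟩)
  have hnot'' : ∀ i < k, i % 2 = 0 → s(p i, p (i+1)) ∉ M'' := by
    intro i hi heven hmem'
    rcases Finset.mem_insert.1 hmem' with h | h
    · rw [helastdef, Sym2.eq_iff] at h
      rcases h with ⟨h1, h2⟩ | ⟨h1, h2⟩
      · exact absurd (hinj i (by omega) (k+1) (by omega) h1) (by omega)
      · exact absurd (hinj i (by omega) (k+2) (by omega) h1) (by omega)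
    · exact hnot i (by omega) heven (Finset.mem_of_mem_erase h)
  have h0'' : ¬ Sat M'' (p 0) := by
    rintro ⟨e, he, hve⟩
    rcases Finset.mem_insert.1 he with rfl | he
    · rcases Sym2.mem_iff.1 hve with h | h
      · exact absurd (hinj 0 (by omega) (k+1) (by omega) h) (by omega)
      · exact absurd (hinj 0 (by omega) (k+2) (by omega) h) (by omega)
    · exact h0 ⟨e, Finset.mem_of_mem_erase he, hve⟩
  have hk'' : ¬ Sat M'' (p k) := by
    rintro ⟨e, he, hve⟩
    rcases Finset.mem_insert.1 he with rfl | he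
    · rcases Sym2.mem_iff.1 hve with h | h
      · exact absurd (hinj k (by omega) (k+1) (by omega) h) (by omega)
      · exact absurd (hinj k (by omega) (k+2) (by omega) h) (by omega)
    · have : e = eprev := matching_unique hM.1 (Finset.mem_of_mem_erase he) heprevM hve
        (Sym2.mem_mk_left _ _)
      exact (Finset.ne_of_mem_erase he) this
  by_cases hmax : ∀ M', IsMatchingIn G M' → M'' ⊆ M' → M' = M''
  · -- M'' is maximal: recurse on the shorter path
    exact IH k (by omega) hkodd M'' p ⟨hM''match, hmax⟩
      (fun i hi j hj h => hinj i (by omega) j (by omega) h)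
      (fun i hi => hadj i (by omega)) hmem'' hnot'' h0'' hk''
  · -- M'' is not maximal: extract a violating edge and produce an augmenting P4 for M
    push_neg at hmax
    obtain ⟨Mx, hMx, hsub, hMxne⟩ := hmax
    obtain ⟨e, heMx, heM''⟩ := Finset.exists_of_ssubset (hsub.ssubset_of_ne (Ne.symm hMxne))
    obtain ⟨a, b, hab, rfl⟩ : ∃ a b, G.Adj a b ∧ e = s(a, b) :=
      edge_endpoints (hMx.1 e heMx)
    have hunsat'' : ∀ v, v ∈ s(a, b) → ¬ Sat M'' v := by
      rintro v hv ⟨f, hf, hvf⟩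
      exact hMx.2 _ heMx f (hsub hf) (fun h => heM'' (h ▸ hf)) v hv hvf
    have ha'' := hunsat'' a (Sym2.mem_mk_left _ _)
    have hb'' := hunsat'' b (Sym2.mem_mk_right _ _)
    -- each endpoint is either p k or M-unsaturated (and ≠ p (k+2))
    have hchar : ∀ v, ¬ Sat M'' v → v = p k ∨ (¬ Sat M v ∧ v ≠ p (k+2)) := by
      intro v hv
      by_cases hs : Sat M v
      · obtain ⟨g, hg, hvg⟩ := hs
        by_cases hge : g = eprev
        · subst hge
          rcases Sym2.mem_iff.1 hvg with h | h
          · exact Or.inl h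
          · exact absurd (h ▸ hsatk1'') hv
        · exact absurd ⟨g, Finset.mem_insert_of_mem (Finset.mem_erase.2 ⟨hge, hg⟩), hvg⟩ hv
      · refine Or.inr ⟨hs, ?_⟩
        rintro rfl
        exact hv hsatk2''
    -- symmetric main argument
    have main : ∀ x y : V, G.Adj x y → x = p k → (¬ Sat M y ∧ y ≠ p (k+2)) → False := by
      rintro x y hxy rfl ⟨hyuns, hyne⟩
      refine H ⟨M, hM, y, p k, p (k+1), p (k+2), ?_, ?_, hyne, ?_, ?_, ?_,
        hxy.symm, hadj k (by omega), hadj (k+1) (by omega), heprevM, hyuns, hT⟩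
      · exact fun h => (h ▸ hxy).ne' rfl
      · rintro rfl; exact hyuns hsatk1
      · exact hne k (by omega) (k+1) (by omega) (by omega)
      · exact hne k (by omega) (k+2) (by omega) (by omega)
      · exact hne (k+1) (by omega) (k+2) (by omega) (by omega)
    rcases hchar a ha'' with ha | ha <;> rcases hchar b hb'' with hb | hb
    · exact hab.ne (ha.trans hb.symm)
    · exact main a b hab ha hb
    · exact main b a hab.symm hb ha
    · exact no_free_edge hM hab ha.1 hb.1

lemma lemC [Fintype V] [DecidableEq (Sym2 V)] (G : SimpleGraph V)
    (H : ¬ ∃ M : Finset (Sym2 V), IsMaximalMatchingIn G M ∧ HasAugP4 G M) :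
    ∀ k (M N : Finset (Sym2 V)), IsMaximalMatchingIn G M → IsMatchingIn G N →
      M.card < N.card → (N \ M).card = k → False := by
  intro k
  induction k using Nat.strong_induction_on with
  | _ k IH =>
  intro M N hM hN hlt hk
  classical
  set A : Finset (Sym2 V) := N \ M with hAdef
  set B : Finset (Sym2 V) := M \ N with hBdef
  have hAN : ∀ e ∈ A, e ∈ N := fun e he => (Finset.mem_sdiff.1 he).1
  have hAM : ∀ e ∈ A, e ∉ M := fun e he => (Finset.mem_sdiff.1 he).2
  have hBM : ∀ e ∈ B, e ∈ M := fun e he => (Finset.mem_sdiff.1 he).1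
  have hBN : ∀ e ∈ B, e ∉ N := fun e he => (Finset.mem_sdiff.1 he).2
  have hcardBA : B.card < A.card := by
    have h1 := Finset.card_sdiff_add_card_inter N M
    have h2 := Finset.card_sdiff_add_card_inter M N
    have h3 : (N ∩ M).card = (M ∩ N).card := by rw [Finset.inter_comm]
    show (M \ N).card < (N \ M).card
    omega
  have hAdiag : ∀ e ∈ A, ¬ e.IsDiag :=
    fun e he => G.not_isDiag_of_mem_edgeSet (hN.1 e (hAN e he))
  have hBdiag : ∀ e ∈ B, ¬ e.IsDiag :=
    fun e he => G.not_isDiag_of_mem_edgeSet (hM.1.1 e (hBM e he))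
  have hAdisj : ∀ e ∈ A, ∀ f ∈ A, e ≠ f → ∀ v : V, v ∈ e → v ∉ f :=
    fun e he f hf hef v => hN.2 e (hAN e he) f (hAN f hf) hef v
  have hBdisj : ∀ e ∈ B, ∀ f ∈ B, e ≠ f → ∀ v : V, v ∈ e → v ∉ f :=
    fun e he f hf hef v => hM.1.2 e (hBM e he) f (hBM f hf) hef v
  obtain ⟨v0, hv0A, hv0B⟩ := exists_sat_notsat A B hAdiag hBdiag hAdisj hBdisj hcardBA
  have hv0M : ¬ Sat M v0 := by
    rintro ⟨g, hg, hvg⟩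
    by_cases hgN : g ∈ N
    · obtain ⟨a0, ha0, hva0⟩ := hv0A
      have : a0 ≠ g := fun h => hAM a0 ha0 (h ▸ hg)
      exact hN.2 a0 (hAN a0 ha0) g hgN this v0 hva0 hvg
    · exact hv0B ⟨g, Finset.mem_sdiff.2 ⟨hg, hgN⟩, hvg⟩
  -- the set of lengths of alternating paths from v0
  set T : Set ℕ := {t | ∃ p : ℕ → V, p 0 = v0 ∧
    (∀ i ≤ t, ∀ j ≤ t, p i = p j → i = j) ∧
    (∀ i < t, i % 2 = 0 → s(p i, p (i+1)) ∈ A) ∧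
    (∀ i < t, i % 2 = 1 → s(p i, p (i+1)) ∈ B)} with hTdef
  have h0T : 0 ∈ T := by
    refine ⟨fun _ => v0, rfl, ?_, ?_, ?_⟩
    · intro i hi j hj _; omega
    · intro i hi; omega
    · intro i hi; omega
  have hbddT : BddAbove T := by
    refine ⟨Fintype.card V, ?_⟩
    rintro t ⟨p, -, hinj, -, -⟩
    have hinjf : Function.Injective (fun i : Fin (t+1) => p i) := by
      intro i j h
      exact Fin.ext (hinj i (Nat.lt_succ_iff.1 i.2) j (Nat.lt_succ_iff.1 j.2) h)
    have := Fintype.card_le_of_injective _ hinjf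
    simp only [Fintype.card_fin] at this
    omega
  obtain ⟨p, hp0, hinj, hA', hB'⟩ := Nat.sSup_mem ⟨0, h0T⟩ hbddT
  set tstar : ℕ := sSup T with htstardef
  have hmaxT : ∀ pp : ℕ → V, pp 0 = v0 →
      (∀ i ≤ tstar + 1, ∀ j ≤ tstar + 1, pp i = pp j → i = j) →
      (∀ i < tstar + 1, i % 2 = 0 → s(pp i, pp (i+1)) ∈ A) →
      (∀ i < tstar + 1, i % 2 = 1 → s(pp i, pp (i+1)) ∈ B) → False := by
    intro pp h1 h2 h3 h4
    have hmem : tstar + 1 ∈ T := ⟨pp, h1, h2, h3, h4⟩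
    have := le_csSup hbddT hmem
    omega
  have hadj : ∀ i < tstar, G.Adj (p i) (p (i+1)) := by
    intro i hi
    rcases Nat.even_or_odd i with he | ho
    · have := hN.1 _ (hAN _ (hA' i hi (Nat.even_iff.1 he)))
      exact (G.mem_edgeSet).1 this
    · have := hM.1.1 _ (hBM _ (hB' i hi (Nat.odd_iff.1 ho)))
      exact (G.mem_edgeSet).1 this
  -- generic extension builder
  have hextend : ∀ x : V, (∀ j ≤ tstar, x ≠ p j) →
      (tstar % 2 = 0 → s(p tstar, x) ∈ A) → (tstar % 2 = 1 → s(p tstar, x) ∈ B) → False := by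
    intro x hfresh hxA hxB
    set pp : ℕ → V := fun i => if i = tstar + 1 then x else p i with hppdef
    have hppeq : ∀ i, i ≤ tstar → pp i = p i := by
      intro i hi
      show (if i = tstar + 1 then x else p i) = p i
      rw [if_neg (by omega)]
    have hpp2 : pp (tstar + 1) = x := by
      show (if tstar + 1 = tstar + 1 then x else p (tstar+1)) = x
      rw [if_pos rfl]
    refine hmaxT pp (by rw [hppeq 0 (by omega), hp0]) ?_ ?_ ?_
    · intro i hi j hj h
      by_cases hi' : i = tstar + 1 <;> by_cases hj' : j = tstar + 1
      · omega
      · rw [hi', hpp2, hppeq j (by omega)] at h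
        exact absurd h (hfresh j (by omega))
      · rw [hj', hpp2, hppeq i (by omega)] at h
        exact absurd h.symm (hfresh i (by omega))
      · rw [hppeq i (by omega), hppeq j (by omega)] at h
        exact hinj i (by omega) j (by omega) h
    · intro i hi heven
      by_cases hit : i = tstar
      · have h1 : pp i = p i := hppeq i (by omega)
        have h2 : pp (i+1) = x := by rw [hit]; exact hpp2
        rw [h1, h2, hit]
        exact hxA (hit ▸ heven)
      · have hit' : i < tstar := by omega
        rw [hppeq i (by omega), hppeq (i+1) (by omega)]
        exact hA' i hit' heven
    · intro i hi hodd
      by_cases hit : i = tstar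
      · have h1 : pp i = p i := hppeq i (by omega)
        have h2 : pp (i+1) = x := by rw [hit]; exact hpp2
        rw [h1, h2, hit]
        exact hxB (hit ▸ hodd)
      · have hit' : i < tstar := by omega
        rw [hppeq i (by omega), hppeq (i+1) (by omega)]
        exact hB' i hit' hodd
  rcases Nat.even_or_odd tstar with htev | htod
  · -- tstar even : swap along the path to decrease (N \ M).card
    have hpar : tstar % 2 = 0 := Nat.even_iff.1 htev
    -- p tstar is not A-saturated
    have hAsat : ¬ Sat A (p tstar) := by
      rintro ⟨g, hg, hvg⟩
      obtain ⟨x, hxne, hgx⟩ := exists_other (hN.1 g (hAN g hg)) hvg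
      have hxg : x ∈ g := by rw [hgx]; exact Sym2.mem_mk_right _ _
      have hfresh : ∀ j ≤ tstar, x ≠ p j := by
        intro j hj hxj
        have hjlt : j < tstar := by
          rcases Nat.lt_or_ge j tstar with h | h
          · exact h
          · exact absurd (hxj.trans (by rw [show j = tstar by omega])) hxne
        rcases Nat.eq_zero_or_pos j with rfl | hjpos
        · -- x = v0 : g and the first path edge are both N-edges at v0
          have htpos : 0 < tstar := hjlt
          have he0 : s(p 0, p 1) ∈ A := hA' 0 htpos rfl
          have : g = s(p 0, p 1) := matching_unique hN (hAN g hg) (hAN _ he0)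
            (hxj ▸ hxg) (Sym2.mem_mk_left _ _)
          rw [this, Sym2.mem_iff] at hvg
          rcases hvg with h | h
          · exact absurd (hinj tstar (by omega) 0 (by omega) h) (by omega)
          · exact absurd (hinj tstar (by omega) 1 (by omega) h) (by omega)
        · rcases Nat.even_or_odd j with hje | hjo
          · -- j even : path N-edge at p j is e_j
            have hej : s(p j, p (j+1)) ∈ A := hA' j hjlt (Nat.even_iff.1 hje)
            have : g = s(p j, p (j+1)) := matching_unique hN (hAN g hg) (hAN _ hej)
              (hxj ▸ hxg) (Sym2.mem_mk_left _ _)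
            rw [this, Sym2.mem_iff] at hvg
            rcases hvg with h | h
            · exact absurd (hinj tstar (by omega) j (by omega) h) (by omega)
            · have hje' := Nat.even_iff.1 hje
              have := hinj tstar (by omega) (j+1) (by omega) h
              omega
          · -- j odd : path N-edge at p j is e_(j-1)
            obtain ⟨m, rfl⟩ : ∃ m, j = m + 1 := ⟨j - 1, by omega⟩
            have hem : s(p m, p (m+1)) ∈ A := hA' m (by omega)
              (by have := Nat.odd_iff.1 hjo; omega)
            have : g = s(p m, p (m+1)) := matching_unique hN (hAN g hg) (hAN _ hem)
              (hxj ▸ hxg) (Sym2.mem_mk_right _ _)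
            rw [this, Sym2.mem_iff] at hvg
            rcases hvg with h | h
            · exact absurd (hinj tstar (by omega) m (by omega) h) (by omega)
            · exact absurd (hinj tstar (by omega) (m+1) (by omega) h) (by omega)
      exact hextend x hfresh (fun _ => hgx ▸ hg) (fun h => absurd h (by omega))
    have htpos : tstar ≠ 0 := by
      intro h
      rw [h] at hAsat
      rw [hp0] at hAsat
      exact hAsat hv0A
    have ht2 : 2 ≤ tstar := by
      rcases Nat.even_iff.1 htev with h
      omega
    -- the swap sets
    set KA : Finset (Sym2 V) := (Finset.range (tstar/2)).image (fun i => s(p (2*i), p (2*i+1))) with hKAdef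
    set KB : Finset (Sym2 V) := (Finset.range (tstar/2)).image (fun i => s(p (2*i+1), p (2*i+2))) with hKBdef
    have hKAsubA : KA ⊆ A := by
      intro e he
      obtain ⟨i, hi, rfl⟩ := Finset.mem_image.1 he
      rw [Finset.mem_range] at hi
      exact hA' (2*i) (by omega) (by omega)
    have hKBsubB : KB ⊆ B := by
      intro e he
      obtain ⟨i, hi, rfl⟩ := Finset.mem_image.1 he
      rw [Finset.mem_range] at hi
      exact hB' (2*i+1) (by omega) (by omega)
    have hKAcard : KA.card = tstar / 2 := by
      rw [hKAdef, Finset.card_image_of_injOn, Finset.card_range]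
      intro i hi j hj h
      rw [Finset.mem_coe, Finset.mem_range] at hi hj
      rw [Sym2.eq_iff] at h
      rcases h with ⟨h1, h2⟩ | ⟨h1, h2⟩
      · have := hinj (2*i) (by omega) (2*j) (by omega) h1; omega
      · have := hinj (2*i) (by omega) (2*j+1) (by omega) h1; omega
    have hKBcard : KB.card = tstar / 2 := by
      rw [hKBdef, Finset.card_image_of_injOn, Finset.card_range]
      intro i hi j hj h
      rw [Finset.mem_coe, Finset.mem_range] at hi hj
      rw [Sym2.eq_iff] at h
      rcases h with ⟨h1, h2⟩ | ⟨h1, h2⟩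
      · have := hinj (2*i+1) (by omega) (2*j+1) (by omega) h1; omega
      · have := hinj (2*i+1) (by omega) (2*j+2) (by omega) h1; omega
    set N2 : Finset (Sym2 V) := (N \ KA) ∪ KB with hN2def
    have hKBnotN : ∀ e ∈ KB, e ∉ N := fun e he => hBN e (hKBsubB he)
    have hN2card : N2.card = N.card := by
      have hdisj : Disjoint (N \ KA) KB := by
        rw [Finset.disjoint_right]
        intro e he hen
        exact hKBnotN e he (Finset.mem_sdiff.1 hen).1
      have hKAN : KA ⊆ N := fun e he => hAN e (hKAsubA he)
      have h2 : tstar / 2 ≤ N.card := hKAcard ▸ Finset.card_le_card hKAN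
      rw [hN2def, Finset.card_union_of_disjoint hdisj,
        Finset.card_sdiff_of_subset hKAN, hKAcard, hKBcard]
      omega
    -- key disjointness fact
    have key : ∀ f ∈ N \ KA, ∀ i, i ∈ Finset.range (tstar/2) →
        ∀ v, v ∈ s(p (2*i+1), p (2*i+2)) → v ∉ f := by
      intro f hf i hi v hv hvf
      rw [Finset.mem_range] at hi
      obtain ⟨hfN, hfKA⟩ := Finset.mem_sdiff.1 hf
      rcases Sym2.mem_iff.1 hv with rfl | rfl
      · -- v = p (2i+1) : its unique N-edge is e_(2i) ∈ KA
        have he2i : s(p (2*i), p (2*i+1)) ∈ A := hA' (2*i) (by omega) (by omega)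
        have : f = s(p (2*i), p (2*i+1)) := matching_unique hN hfN (hAN _ he2i)
          hvf (Sym2.mem_mk_right _ _)
        exact hfKA (this ▸ Finset.mem_image_of_mem _ (Finset.mem_range.2 hi))
      · -- v = p (2i+2)
        by_cases h : 2*i + 2 < tstar
        · have he2i2 : s(p (2*(i+1)), p (2*(i+1)+1)) ∈ A := by
            have h21 : 2*(i+1) = 2*i+2 := by ring
            rw [h21]
            exact hA' (2*i+2) h (by omega)
          have : f = s(p (2*(i+1)), p (2*(i+1)+1)) := matching_unique hN hfN (hAN _ he2i2)
            hvf (by rw [show 2*(i+1) = 2*i+2 by ring]; exact Sym2.mem_mk_left _ _)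
          exact hfKA (this ▸ Finset.mem_image_of_mem _ (Finset.mem_range.2 (by omega)))
        · -- 2i+2 = tstar : v = p tstar
          have hveq : 2*i + 2 = tstar := by omega
          by_cases hfM : f ∈ M
          · -- f would coincide with the M-edge e_(2i+1) ∈ B, but that is not in N
            have heB : s(p (2*i+1), p (2*i+2)) ∈ B := hB' (2*i+1) (by omega) (by omega)
            have : f = s(p (2*i+1), p (2*i+2)) := matching_unique hM.1 hfM (hBM _ heB)
              hvf (Sym2.mem_mk_right _ _)
            exact hBN _ heB (this ▸ hfN)
          · exact hAsat ⟨f, Finset.mem_sdiff.2 ⟨hfN, hfM⟩, by rw [← hveq]; exact hvf⟩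
    have hN2match : IsMatchingIn G N2 := by
      constructor
      · intro e he
        rcases Finset.mem_union.1 he with he | he
        · exact hN.1 e (Finset.mem_sdiff.1 he).1
        · exact hM.1.1 e (hBM e (hKBsubB he))
      · intro e he f hf hef v hve hvf
        rcases Finset.mem_union.1 he with he' | he' <;> rcases Finset.mem_union.1 hf with hf' | hf'
        · exact hN.2 e (Finset.mem_sdiff.1 he').1 f (Finset.mem_sdiff.1 hf').1 hef v hve hvf
        · obtain ⟨i, hi, rfl⟩ := Finset.mem_image.1 hf'
          exact key e he' i hi v hvf hve
        · obtain ⟨i, hi, rfl⟩ := Finset.mem_image.1 he'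
          exact key f hf' i hi v hve hvf
        · exact hM.1.2 e (hBM e (hKBsubB he')) f (hBM f (hKBsubB hf')) hef v hve hvf
    have hN2sdiff : N2 \ M = A \ KA := by
      ext e
      simp only [hN2def, hAdef, Finset.mem_sdiff, Finset.mem_union]
      constructor
      · rintro ⟨(⟨heN, heKA⟩ | heKB), heM⟩
        · exact ⟨⟨heN, heM⟩, heKA⟩
        · exact absurd (hBM e (hKBsubB heKB)) heM
      · rintro ⟨⟨heN, heM⟩, heKA⟩
        exact ⟨Or.inl ⟨heN, heKA⟩, heM⟩
    have hlt2 : (N2 \ M).card < k := by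
      rw [hN2sdiff, Finset.card_sdiff_of_subset hKAsubA, hKAcard]
      have h1 : 1 ≤ tstar / 2 := by omega
      have h2 : tstar / 2 ≤ A.card := by
        have := Finset.card_le_card hKAsubA
        omega
      omega
    exact IH _ hlt2 M N2 hM hN2match (by omega) rfl
  · -- tstar odd : we get an M-augmenting path, contradiction via lemB
    have hpar : tstar % 2 = 1 := Nat.odd_iff.1 htod
    have hBsat : ¬ Sat B (p tstar) := by
      rintro ⟨g, hg, hvg⟩
      obtain ⟨x, hxne, hgx⟩ := exists_other (hM.1.1 g (hBM g hg)) hvg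
      have hxg : x ∈ g := by rw [hgx]; exact Sym2.mem_mk_right _ _
      have hfresh : ∀ j ≤ tstar, x ≠ p j := by
        intro j hj hxj
        have hjlt : j < tstar := by
          rcases Nat.lt_or_ge j tstar with h | h
          · exact h
          · exact absurd (hxj.trans (by rw [show j = tstar by omega])) hxne
        rcases Nat.eq_zero_or_pos j with rfl | hjpos
        · -- x = v0 is M-unsaturated but lies in g ∈ B ⊆ M
          exact hv0M ⟨g, hBM g hg, by rw [← hp0, ← hxj]; exact hxg⟩
        · rcases Nat.even_or_odd j with hje | hjo
          · -- j even ≥ 2 : the M-edge of the path at p j is e_(j-1)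
            obtain ⟨m, rfl⟩ : ∃ m, j = m + 1 := ⟨j - 1, by omega⟩
            have hem : s(p m, p (m+1)) ∈ B := hB' m (by omega)
              (by have := Nat.even_iff.1 hje; omega)
            have : g = s(p m, p (m+1)) := matching_unique hM.1 (hBM g hg) (hBM _ hem)
              (hxj ▸ hxg) (Sym2.mem_mk_right _ _)
            rw [this, Sym2.mem_iff] at hvg
            rcases hvg with h | h
            · exact absurd (hinj tstar (by omega) m (by omega) h) (by omega)
            · have := hinj tstar (by omega) (m+1) (by omega) h
              omega
          · -- j odd : the M-edge of the path at p j is e_j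
            have hej : s(p j, p (j+1)) ∈ B := hB' j hjlt (Nat.odd_iff.1 hjo)
            have : g = s(p j, p (j+1)) := matching_unique hM.1 (hBM g hg) (hBM _ hej)
              (hxj ▸ hxg) (Sym2.mem_mk_left _ _)
            rw [this, Sym2.mem_iff] at hvg
            rcases hvg with h | h
            · exact absurd (hinj tstar (by omega) j (by omega) h) (by omega)
            · have hjo' := Nat.odd_iff.1 hjo
              have := hinj tstar (by omega) (j+1) (by omega) h
              omega
      exact hextend x hfresh (fun h => absurd h (by omega)) (fun _ => hgx ▸ hg)
    have hMt : ¬ Sat M (p tstar) := by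
      rintro ⟨g, hg, hvg⟩
      by_cases hgN : g ∈ N
      · obtain ⟨m, hm⟩ : ∃ m, tstar = m + 1 := ⟨tstar - 1, by omega⟩
        have hem : s(p m, p (m+1)) ∈ A := hA' m (by omega) (by omega)
        have hne' : g ≠ s(p m, p (m+1)) := fun h => hAM _ hem (h ▸ hg)
        exact hN.2 g hgN _ (hAN _ hem) hne' (p tstar) hvg
          (by rw [hm]; exact Sym2.mem_mk_right _ _)
      · exact hBsat ⟨g, Finset.mem_sdiff.2 ⟨hg, hgN⟩, hvg⟩
    exact lemB G H tstar hpar M p hM hinj hadj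
      (fun i hi hodd => hBM _ (hB' i hi hodd))
      (fun i hi heven => hAM _ (hA' i hi heven))
      (by rw [hp0]; exact hv0M) hMt

theorem stmt_4 {V : Type*} [Fintype V] (G : SimpleGraph V) :
    Equimatchable G ↔ ¬ ∃ M : Finset (Sym2 V), IsMaximalMatchingIn G M ∧ HasAugP4 G M := by
  classical
  constructor
  · rintro hEq ⟨M, hM, u, w, y, v, huw, huy, huv, hwy, hwv, hyv,
      hauw, hawy, hayv, hwyM, hu, hv⟩
    set M' : Finset (Sym2 V) := insert s(u,w) (insert s(y,v) (M.erase s(w,y))) with hM'def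
    have key1 : ∀ g ∈ insert s(y,v) (M.erase s(w,y)), ∀ z, z ∈ s(u,w) → z ∉ g := by
      intro g hg z hz hzg
      rcases Sym2.mem_iff.1 hz with hz' | hz'
      · rcases Finset.mem_insert.1 hg with rfl | hg
        · rcases Sym2.mem_iff.1 (hz' ▸ hzg : u ∈ s(y,v)) with h | h
          · exact huy h
          · exact huv h
        · exact hu ⟨g, Finset.mem_of_mem_erase hg, hz' ▸ hzg⟩
      · rcases Finset.mem_insert.1 hg with rfl | hg
        · rcases Sym2.mem_iff.1 (hz' ▸ hzg : w ∈ s(y,v)) with h | h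
          · exact hwy h
          · exact hwv h
        · have : g = s(w,y) := matching_unique hM.1 (Finset.mem_of_mem_erase hg) hwyM
            (hz' ▸ hzg) (Sym2.mem_mk_left _ _)
          exact (Finset.ne_of_mem_erase hg) this
    have key2 : ∀ g ∈ M.erase s(w,y), ∀ z, z ∈ s(y,v) → z ∉ g := by
      intro g hg z hz hzg
      rcases Sym2.mem_iff.1 hz with hz' | hz'
      · have : g = s(w,y) := matching_unique hM.1 (Finset.mem_of_mem_erase hg) hwyM
          (hz' ▸ hzg) (Sym2.mem_mk_right _ _)
        exact (Finset.ne_of_mem_erase hg) this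
      · exact hv ⟨g, Finset.mem_of_mem_erase hg, hz' ▸ hzg⟩
    have hM'match : IsMatchingIn G M' := by
      constructor
      · intro e he
        rcases Finset.mem_insert.1 he with rfl | he
        · exact hauw
        · rcases Finset.mem_insert.1 he with rfl | he
          · exact hayv
          · exact hM.1.1 e (Finset.mem_of_mem_erase he)
      · intro e he f hf hef z hze hzf
        rcases Finset.mem_insert.1 he with rfl | he <;>
          rcases Finset.mem_insert.1 hf with rfl | hf
        · exact hef rfl
        · exact key1 f hf z hze hzf
        · exact key1 e he z hzf hze
        · rcases Finset.mem_insert.1 he with rfl | he <;>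
            rcases Finset.mem_insert.1 hf with rfl | hf
          · exact hef rfl
          · exact key2 f hf z hze hzf
          · exact key2 e he z hzf hze
          · exact hM.1.2 e (Finset.mem_of_mem_erase he) f (Finset.mem_of_mem_erase hf)
              hef z hze hzf
    have h1 : s(y,v) ∉ M.erase s(w,y) :=
      fun h => hv ⟨_, Finset.mem_of_mem_erase h, Sym2.mem_mk_right _ _⟩
    have h2 : s(u,w) ∉ insert s(y,v) (M.erase s(w,y)) := by
      intro h
      rcases Finset.mem_insert.1 h with h | h
      · rw [Sym2.eq_iff] at h
        rcases h with ⟨ha, hb⟩ | ⟨ha, hb⟩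
        · exact huy ha
        · exact huv ha
      · exact hu ⟨_, Finset.mem_of_mem_erase h, Sym2.mem_mk_left _ _⟩
    have hcard : M'.card = M.card + 1 := by
      rw [hM'def, Finset.card_insert_of_notMem h2, Finset.card_insert_of_notMem h1,
        Finset.card_erase_of_mem hwyM]
      have : 0 < M.card := Finset.card_pos.2 ⟨_, hwyM⟩
      omega
    obtain ⟨M'', hsub, hmax''⟩ := extend_to_maximal G hM'match
    have heq := hEq M M'' hM hmax''
    have hle : M'.card ≤ M''.card := Finset.card_le_card hsub
    omega
  · intro H M M' hM hM'
    rcases lt_trichotomy M.card M'.card with h | h | h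
    · exact (lemC G H _ M M' hM hM'.1 h rfl).elim
    · exact h
    · exact (lemC G H _ M' M hM' hM.1 h rfl).elim
end

section
/- Let G be a finite simple graph. Then μ(G) ≤ 1 if and only if every two maximal matchings of G that each have an augmenting P4 have the same size. -/
open SimpleGraph

variable {V : Type*}

section Aux

variable {G : SimpleGraph V} {M N : Finset (Sym2 V)}

lemma mg_sat_of_mem {e : Sym2 V} (he : e ∈ M) {v : V} (hv : v ∈ e) : Sat M v := ⟨e, he, hv⟩

lemma mg_empty_matching : IsMatchingIn G (∅ : Finset (Sym2 V)) := by
  constructor <;> simp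

/-- characterization of maximal matchings -/
lemma mg_maximal_iff :
    IsMaximalMatchingIn G M ↔
      IsMatchingIn G M ∧ ∀ a b : V, G.Adj a b → Sat M a ∨ Sat M b := by
  classical
  constructor
  · rintro ⟨hM, hmax⟩
    refine ⟨hM, fun a b hab => ?_⟩
    by_contra hcon
    push_neg at hcon
    obtain ⟨ha, hb⟩ := hcon
    have hnotmem : s(a, b) ∉ M := fun h => ha (mg_sat_of_mem h (by simp))
    have hM' : IsMatchingIn G (insert s(a, b) M) := by
      constructor
      · intro e he
        rcases Finset.mem_insert.mp he with rfl | he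
        · exact hab
        · exact hM.1 e he
      · intro e he f hf hef v hve hvf
        rcases Finset.mem_insert.mp he with he1 | he2
        · rcases Finset.mem_insert.mp hf with hf1 | hf2
          · exact hef (he1.trans hf1.symm)
          · rw [he1] at hve
            rcases Sym2.mem_iff.mp hve with h | h
            · exact ha ⟨f, hf2, h ▸ hvf⟩
            · exact hb ⟨f, hf2, h ▸ hvf⟩
        · rcases Finset.mem_insert.mp hf with hf1 | hf2
          · rw [hf1] at hvf
            rcases Sym2.mem_iff.mp hvf with h | h
            · exact ha ⟨e, he2, h ▸ hve⟩
            · exact hb ⟨e, he2, h ▸ hve⟩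
          · exact hM.2 e he2 f hf2 hef v hve hvf
    have := hmax _ hM' (Finset.subset_insert _ _)
    exact hnotmem (this ▸ Finset.mem_insert_self _ _)
  · rintro ⟨hM, hsat⟩
    refine ⟨hM, fun M' hM' hsub => ?_⟩
    by_contra hne
    obtain ⟨e, heM', heM⟩ := Finset.exists_of_ssubset (hsub.ssubset_of_ne (Ne.symm hne))
    induction e using Sym2.ind with
    | _ a b =>
      have hab : G.Adj a b := hM'.1 _ heM'
      rcases hsat a b hab with ⟨f, hf, haf⟩ | ⟨f, hf, hbf⟩
      · exact hM'.2 _ heM' f (hsub hf) (fun h => heM (h ▸ hf)) a (by simp) haf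
      · exact hM'.2 _ heM' f (hsub hf) (fun h => heM (h ▸ hf)) b (by simp) hbf

end Aux

section Aux2

variable {G : SimpleGraph V} {M N : Finset (Sym2 V)}

lemma mg_sat_unique (hM : IsMatchingIn G M) {e f : Sym2 V} (he : e ∈ M) (hf : f ∈ M)
    {v : V} (hv : v ∈ e) (hv' : v ∈ f) : e = f := by
  by_contra h
  exact hM.2 e he f hf h v hv hv'

variable [Fintype V]

lemma mg_bddAbove : BddAbove {n | ∃ M, IsMatchingIn G M ∧ M.card = n} := by
  classical
  refine ⟨Fintype.card (Sym2 V), ?_⟩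
  rintro n ⟨M, -, rfl⟩
  exact Finset.card_le_univ M

lemma mg_exists_nu (G : SimpleGraph V) : ∃ N, IsMatchingIn G N ∧ N.card = nuNum G := by
  have h0 : (0 : ℕ) ∈ {n | ∃ M, IsMatchingIn G M ∧ M.card = n} :=
    ⟨∅, mg_empty_matching (G := G), by simp⟩
  exact Nat.sSup_mem ⟨0, h0⟩ mg_bddAbove

lemma mg_card_le_nu (hM : IsMatchingIn G M) : M.card ≤ nuNum G :=
  le_csSup mg_bddAbove ⟨M, hM, rfl⟩

lemma mg_exists_maximal_superset (hM : IsMatchingIn G M) :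
    ∃ M', IsMaximalMatchingIn G M' ∧ M ⊆ M' := by
  classical
  obtain ⟨M', hM'mem, hbig⟩ := Finset.exists_max_image
    ((Finset.univ : Finset (Finset (Sym2 V))).filter (fun K => IsMatchingIn G K ∧ M ⊆ K))
    Finset.card ⟨M, by simp [hM]⟩
  simp only [Finset.mem_filter, Finset.mem_univ, true_and] at hM'mem hbig
  refine ⟨M', ⟨hM'mem.1, fun M'' hM'' hsub => ?_⟩, hM'mem.2⟩
  exact (Finset.eq_of_subset_of_card_le hsub (hbig M'' ⟨hM'', hM'mem.2.trans hsub⟩)).symm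

lemma mg_exists_beta (G : SimpleGraph V) :
    ∃ B, IsMaximalMatchingIn G B ∧ B.card = betaNum G := by
  obtain ⟨B, hB, -⟩ := mg_exists_maximal_superset (G := G) mg_empty_matching
  have h0 : B.card ∈ {n | ∃ M, IsMaximalMatchingIn G M ∧ M.card = n} := ⟨B, hB, rfl⟩
  exact Nat.sInf_mem ⟨B.card, h0⟩

lemma mg_beta_le (h : IsMaximalMatchingIn G M) : betaNum G ≤ M.card :=
  Nat.sInf_le ⟨M, h, rfl⟩

open Classical in
lemma mg_card_sat (hM : IsMatchingIn G M) :
    (Finset.univ.filter (fun v => Sat M v)).card = 2 * M.card := by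
  classical
  have heq : Finset.univ.filter (fun v => Sat M v)
      = M.biUnion (fun e => Finset.univ.filter (· ∈ e)) := by
    ext v
    rw [Finset.mem_filter]
    simp [Sat]
  rw [heq, Finset.card_biUnion]
  · rw [Finset.sum_congr rfl (fun e he => ?_), Finset.sum_const, smul_eq_mul, mul_comm]
    have hne : ¬ e.IsDiag := G.not_isDiag_of_mem_edgeSet (hM.1 e he)
    induction e using Sym2.ind with
    | _ a b =>
      have hab : a ≠ b := by simpa using hne
      have : Finset.univ.filter (· ∈ s(a, b)) = {a, b} := by
        ext z; simp [Sym2.mem_iff]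
      rw [this, Finset.card_pair hab]
  · intro e he f hf hef
    simp only [Finset.disjoint_left, Finset.mem_filter, Finset.mem_univ, true_and]
    intro z hze hzf
    exact hM.2 e he f hf hef z hze hzf

lemma mg_exists_unsat (hM : IsMatchingIn G M) (hN : IsMatchingIn G N)
    (h : M.card < N.card) : ∃ u, Sat N u ∧ ¬ Sat M u := by
  classical
  by_contra hcon
  push_neg at hcon
  have hsub : Finset.univ.filter (fun v => Sat N v) ⊆ Finset.univ.filter (fun v => Sat M v) := by
    intro v hv
    simp only [Finset.mem_filter, Finset.mem_univ, true_and] at hv ⊢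
    exact hcon v hv
  have := Finset.card_le_card hsub
  rw [mg_card_sat hN, mg_card_sat hM] at this
  omega

end Aux2

section Aux3

variable [DecidableEq V] {G : SimpleGraph V} {M : Finset (Sym2 V)}

/-- Augmenting along an augmenting `P₄` gives a bigger matching covering at least as much. -/
lemma mg_augment {u w y v : V} (hM : IsMatchingIn G M)
    (huw : G.Adj u w) (hyv : G.Adj y v)
    (huy : u ≠ y) (huv : u ≠ v) (hwv : w ≠ v)
    (hwy : s(w, y) ∈ M) (hu : ¬ Sat M u) (hv : ¬ Sat M v) :
    IsMatchingIn G (insert s(u, w) (insert s(y, v) (M.erase s(w, y)))) ∧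
    (insert s(u, w) (insert s(y, v) (M.erase s(w, y)))).card = M.card + 1 ∧
    (∀ z, Sat M z → Sat (insert s(u, w) (insert s(y, v) (M.erase s(w, y)))) z) := by
  classical
  have hwyadj : G.Adj w y := G.mem_edgeSet.mp (hM.1 _ hwy)
  have hwney : w ≠ y := hwyadj.ne
  have hunw : u ≠ w := huw.ne
  have hynv : y ≠ v := hyv.ne
  -- membership facts
  have huwnM : s(u, w) ∉ M := fun h => hu ⟨_, h, by simp⟩
  have hyvnM : s(y, v) ∉ M := fun h => hv ⟨_, h, by simp⟩
  have hne1 : s(u, w) ≠ s(y, v) := by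
    intro h
    have : u ∈ s(y, v) := h ▸ (by simp : u ∈ s(u, w))
    rcases Sym2.mem_iff.mp this with h' | h' <;> [exact huy h'; exact huv h']
  -- vertex-in-edge clash helpers
  have key1 : ∀ g ∈ M, g ≠ s(w, y) → ∀ z, z ∈ s(u, w) → z ∉ g := by
    intro g hg hgne z hz hzg
    rcases Sym2.mem_iff.mp hz with rfl | rfl
    · exact hu ⟨g, hg, hzg⟩
    · exact hM.2 g hg _ hwy hgne z hzg (by simp)
  have key2 : ∀ g ∈ M, g ≠ s(w, y) → ∀ z, z ∈ s(y, v) → z ∉ g := by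
    intro g hg hgne z hz hzg
    rcases Sym2.mem_iff.mp hz with rfl | rfl
    · exact hM.2 g hg _ hwy hgne z hzg (by simp)
    · exact hv ⟨g, hg, hzg⟩
  have key3 : ∀ z, z ∈ s(u, w) → z ∉ s(y, v) := by
    intro z hz hz'
    rcases Sym2.mem_iff.mp hz with rfl | rfl <;>
      rcases Sym2.mem_iff.mp hz' with h | h
    · exact huy h
    · exact huv h
    · exact hwney h
    · exact hwv h
  refine ⟨⟨?_, ?_⟩, ?_, ?_⟩
  · intro e he
    simp only [Finset.mem_insert, Finset.mem_erase] at he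
    rcases he with rfl | rfl | ⟨-, he⟩
    · exact huw
    · exact hyv
    · exact hM.1 _ he
  · intro e he f hf hef z hze hzf
    simp only [Finset.mem_insert, Finset.mem_erase] at he hf
    rcases he with rfl | rfl | ⟨hene, he⟩
    · rcases hf with rfl | rfl | ⟨hfne, hf⟩
      · exact hef rfl
      · exact key3 z hze hzf
      · exact key1 f hf hfne z hze hzf
    · rcases hf with rfl | rfl | ⟨hfne, hf⟩
      · exact key3 z hzf hze
      · exact hef rfl
      · exact key2 f hf hfne z hze hzf
    · rcases hf with rfl | rfl | ⟨hfne, hf⟩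
      · exact key1 e he hene z hzf hze
      · exact key2 e he hene z hzf hze
      · exact hM.2 e he f hf hef z hze hzf
  · have h1 : s(y, v) ∉ M.erase s(w, y) := fun h => hyvnM (Finset.mem_of_mem_erase h)
    have h2 : s(u, w) ∉ insert s(y, v) (M.erase s(w, y)) := by
      simp only [Finset.mem_insert]
      rintro (h | h)
      · exact hne1 h
      · exact huwnM (Finset.mem_of_mem_erase h)
    rw [Finset.card_insert_of_notMem h2, Finset.card_insert_of_notMem h1,
      Finset.card_erase_of_mem hwy]
    have : 1 ≤ M.card := Finset.card_pos.mpr ⟨_, hwy⟩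
    omega
  · rintro z ⟨e, he, hze⟩
    by_cases h : e = s(w, y)
    · subst h
      rcases Sym2.mem_iff.mp hze with rfl | rfl
      · exact ⟨s(u, z), by simp, by simp⟩
      · exact ⟨s(z, v), by simp, by simp⟩
    · exact ⟨e, by simp [Finset.mem_erase, h, he], hze⟩

/-- Swapping a matching edge `wy` for `uw` with `u` unsaturated. -/
lemma mg_swap {u w y : V} (hM : IsMatchingIn G M) (huw : G.Adj u w)
    (hwy : s(w, y) ∈ M) (hu : ¬ Sat M u) :
    IsMatchingIn G (insert s(u, w) (M.erase s(w, y))) ∧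
    (insert s(u, w) (M.erase s(w, y))).card = M.card ∧
    (∀ z, Sat (insert s(u, w) (M.erase s(w, y))) z ↔ ((Sat M z ∧ z ≠ y) ∨ z = u)) := by
  classical
  have hwyadj : G.Adj w y := G.mem_edgeSet.mp (hM.1 _ hwy)
  have hwney : w ≠ y := hwyadj.ne
  have huny : u ≠ y := fun h => hu ⟨_, hwy, by simp [h]⟩
  have huwnM : s(u, w) ∉ M := fun h => hu ⟨_, h, by simp⟩
  have key1 : ∀ g ∈ M, g ≠ s(w, y) → ∀ z, z ∈ s(u, w) → z ∉ g := by
    intro g hg hgne z hz hzg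
    rcases Sym2.mem_iff.mp hz with rfl | rfl
    · exact hu ⟨g, hg, hzg⟩
    · exact hM.2 g hg _ hwy hgne z hzg (by simp)
  refine ⟨⟨?_, ?_⟩, ?_, ?_⟩
  · intro e he
    simp only [Finset.mem_insert, Finset.mem_erase] at he
    rcases he with rfl | ⟨-, he⟩
    · exact huw
    · exact hM.1 _ he
  · intro e he f hf hef z hze hzf
    simp only [Finset.mem_insert, Finset.mem_erase] at he hf
    rcases he with rfl | ⟨hene, he⟩
    · rcases hf with rfl | ⟨hfne, hf⟩
      · exact hef rfl
      · exact key1 f hf hfne z hze hzf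
    · rcases hf with rfl | ⟨hfne, hf⟩
      · exact key1 e he hene z hzf hze
      · exact hM.2 e he f hf hef z hze hzf
  · have h2 : s(u, w) ∉ M.erase s(w, y) := fun h => huwnM (Finset.mem_of_mem_erase h)
    rw [Finset.card_insert_of_notMem h2, Finset.card_erase_of_mem hwy]
    have : 1 ≤ M.card := Finset.card_pos.mpr ⟨_, hwy⟩
    omega
  · intro z
    constructor
    · rintro ⟨e, he, hze⟩
      simp only [Finset.mem_insert, Finset.mem_erase] at he
      rcases he with rfl | ⟨hene, he⟩
      · rcases Sym2.mem_iff.mp hze with rfl | rfl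
        · exact Or.inr rfl
        · exact Or.inl ⟨⟨_, hwy, by simp⟩, hwney⟩
      · refine Or.inl ⟨⟨e, he, hze⟩, ?_⟩
        rintro rfl
        exact hene (mg_sat_unique hM he hwy hze (by simp))
    · rintro (⟨⟨e, he, hze⟩, hzy⟩ | rfl)
      · by_cases h : e = s(w, y)
        · subst h
          rcases Sym2.mem_iff.mp hze with rfl | rfl
          · exact ⟨s(u, z), by simp, by simp⟩
          · exact absurd rfl hzy
        · exact ⟨e, by simp [Finset.mem_erase, h, he], hze⟩
      · exact ⟨s(z, w), by simp, by simp⟩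

end Aux3

section Key

variable [Fintype V] [DecidableEq V] {G : SimpleGraph V}

lemma mg_key_aux (N : Finset (Sym2 V)) (hN : IsMatchingIn G N) :
    ∀ (k : ℕ) (M : Finset (Sym2 V)), ((M \ N) ∪ (N \ M)).card ≤ k →
      IsMaximalMatchingIn G M → M.card < N.card →
      ∃ M'', IsMaximalMatchingIn G M'' ∧ M''.card = M.card ∧ HasAugP4 G M'' := by
  intro k
  induction k with
  | zero =>
    intro M hcard hMmax hMlt
    exfalso
    have h0 : ((M \ N) ∪ (N \ M)) = ∅ := Finset.card_eq_zero.mp (Nat.le_zero.mp hcard)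
    have hMN : M = N := by
      apply Finset.Subset.antisymm <;> intro x hx
      · by_contra hxN
        have : x ∈ (M \ N) ∪ (N \ M) := Finset.mem_union_left _ (Finset.mem_sdiff.mpr ⟨hx, hxN⟩)
        simp [h0] at this
      · by_contra hxM
        have : x ∈ (M \ N) ∪ (N \ M) := Finset.mem_union_right _ (Finset.mem_sdiff.mpr ⟨hx, hxM⟩)
        simp [h0] at this
    rw [hMN] at hMlt
    omega
  | succ k ih =>
    intro M hcard hMmax hMlt
    obtain ⟨u, huN, huM⟩ := mg_exists_unsat hMmax.1 hN hMlt
    obtain ⟨e, heN, hue⟩ := huN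
    set w := Sym2.Mem.other hue with hw
    have hew : s(u, w) = e := Sym2.other_spec hue
    have heuw : s(u, w) ∈ N := hew ▸ heN
    have huwadj : G.Adj u w := G.mem_edgeSet.mp (hN.1 _ heuw)
    have hsatw : Sat M w := by
      rcases (mg_maximal_iff.mp hMmax).2 u w huwadj with h | h
      · exact absurd h huM
      · exact h
    obtain ⟨f, hfM, hwf⟩ := hsatw
    set y := Sym2.Mem.other hwf with hy
    have hfy : s(w, y) = f := Sym2.other_spec hwf
    have hfwy : s(w, y) ∈ M := hfy ▸ hfM
    have hwyadj : G.Adj w y := G.mem_edgeSet.mp (hMmax.1.1 _ hfwy)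
    have hyu : y ≠ u := fun h => huM ⟨s(w, y), hfwy, by simp [h]⟩
    by_cases hc : ∃ v, G.Adj y v ∧ ¬ Sat M v ∧ v ≠ u
    · obtain ⟨v, hyv, hvM, hvu⟩ := hc
      refine ⟨M, hMmax, rfl, u, w, y, v, huwadj.ne, hyu.symm, hvu.symm, hwyadj.ne, ?_,
        hyv.ne, huwadj, hwyadj, hyv, hfwy, huM, hvM⟩
      intro h
      exact hvM ⟨s(w, y), hfwy, by simp [h]⟩
    · push_neg at hc
      obtain ⟨hM₁, hcard₁, hsat₁⟩ := mg_swap hMmax.1 huwadj hfwy huM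
      set M₁ := insert s(u, w) (M.erase s(w, y)) with hM₁def
      have hM₁max : IsMaximalMatchingIn G M₁ := by
        refine mg_maximal_iff.mpr ⟨hM₁, fun a b hab => ?_⟩
        have step : ∀ c d : V, G.Adj c d → Sat M c → Sat M₁ c ∨ Sat M₁ d := by
          intro c d hcd hsatc
          by_cases hcy : c = y
          · subst hcy
            by_cases hb : Sat M d
            · right; exact (hsat₁ d).mpr (Or.inl ⟨hb, hcd.ne'⟩)
            · right; exact (hsat₁ d).mpr (Or.inr (hc d hcd hb))
          · left; exact (hsat₁ c).mpr (Or.inl ⟨hsatc, hcy⟩)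
        rcases (mg_maximal_iff.mp hMmax).2 a b hab with h | h
        · exact step a b hab h
        · exact (step b a hab.symm h).symm
      -- the symmetric difference strictly decreases
      have hsub : (M₁ \ N) ∪ (N \ M₁) ⊆ (M \ N) ∪ (N \ M) := by
        intro g hg
        rcases Finset.mem_union.mp hg with hg | hg
        · obtain ⟨hgM₁, hgN⟩ := Finset.mem_sdiff.mp hg
          rcases Finset.mem_insert.mp hgM₁ with rfl | hgM
          · exact absurd heuw hgN
          · exact Finset.mem_union_left _
              (Finset.mem_sdiff.mpr ⟨Finset.mem_of_mem_erase hgM, hgN⟩)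
        · obtain ⟨hgN, hgM₁⟩ := Finset.mem_sdiff.mp hg
          have hgne : g ≠ s(u, w) := fun h => hgM₁ (h ▸ Finset.mem_insert_self _ _)
          have hgnwy : g ≠ s(w, y) := by
            rintro rfl
            exact hN.2 _ hgN _ heuw hgne w (by simp) (by simp)
          refine Finset.mem_union_right _ (Finset.mem_sdiff.mpr ⟨hgN, fun hgM => ?_⟩)
          exact hgM₁ (Finset.mem_insert_of_mem (Finset.mem_erase.mpr ⟨hgnwy, hgM⟩))
      have hwyN : s(w, y) ∉ N := by
        intro hin
        have hne : s(w, y) ≠ s(u, w) := by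
          intro h
          have : u ∈ s(w, y) := h ▸ (by simp : u ∈ s(u, w))
          rcases Sym2.mem_iff.mp this with h' | h'
          · exact huwadj.ne h'
          · exact hyu h'.symm
        exact hN.2 _ hin _ heuw hne w (by simp) (by simp)
      have hwit : s(w, y) ∈ (M \ N) ∪ (N \ M) :=
        Finset.mem_union_left _ (Finset.mem_sdiff.mpr ⟨hfwy, hwyN⟩)
      have hwit2 : s(w, y) ∉ (M₁ \ N) ∪ (N \ M₁) := by
        intro hin
        rcases Finset.mem_union.mp hin with hin | hin
        · obtain ⟨hin1, -⟩ := Finset.mem_sdiff.mp hin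
          rcases Finset.mem_insert.mp hin1 with h | h
          · have : u ∈ s(w, y) := h ▸ (by simp : u ∈ s(u, w))
            rcases Sym2.mem_iff.mp this with h' | h'
            · exact huwadj.ne h'
            · exact hyu h'.symm
          · exact (Finset.mem_erase.mp h).1 rfl
        · exact hwyN (Finset.mem_sdiff.mp hin).1
      have hlt : ((M₁ \ N) ∪ (N \ M₁)).card < ((M \ N) ∪ (N \ M)).card :=
        Finset.card_lt_card (Finset.ssubset_iff_of_subset hsub |>.mpr
          ⟨s(w, y), hwit, hwit2⟩)
      obtain ⟨M'', hM''max, hM''card, hM''aug⟩ :=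
        ih M₁ (by omega) hM₁max (hcard₁ ▸ hMlt)
      exact ⟨M'', hM''max, by omega, hM''aug⟩

lemma mg_key {M : Finset (Sym2 V)} (hM : IsMaximalMatchingIn G M) (h : M.card < nuNum G) :
    ∃ M'', IsMaximalMatchingIn G M'' ∧ M''.card = M.card ∧ HasAugP4 G M'' := by
  obtain ⟨N, hN, hNcard⟩ := mg_exists_nu G
  exact mg_key_aux N hN _ M le_rfl hM (by omega)

end Key
theorem stmt_5 {V : Type*} [Fintype V] (G : SimpleGraph V) :
    muGap G ≤ 1 ↔
      ∀ M M' : Finset (Sym2 V), IsMaximalMatchingIn G M → IsMaximalMatchingIn G M' →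
        HasAugP4 G M → HasAugP4 G M' → M.card = M'.card := by
  classical
  constructor
  · intro hmu M M' hM hM' hA hA'
    have key : ∀ K : Finset (Sym2 V), IsMaximalMatchingIn G K → HasAugP4 G K →
        K.card + 1 = nuNum G := by
      rintro K hK ⟨u, w, y, v, huw, huy, huv, hwy, hwv, hyv, auw, awy, ayv, hmem, hu, hv⟩
      obtain ⟨hm, hc, -⟩ := mg_augment hK.1 auw ayv huy huv hwv hmem hu hv
      have h1 : K.card + 1 ≤ nuNum G := hc ▸ mg_card_le_nu hm
      have h2 : betaNum G ≤ K.card := mg_beta_le hK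
      have h3 : nuNum G - betaNum G ≤ 1 := hmu
      omega
    have e1 := key M hM hA
    have e2 := key M' hM' hA'
    omega
  · intro h
    by_contra hmu
    have h2 : betaNum G + 2 ≤ nuNum G := by
      unfold muGap at hmu
      omega
    obtain ⟨B, hB, hBcard⟩ := mg_exists_beta G
    obtain ⟨M1, hM1, hM1card, hM1aug⟩ := mg_key hB (by omega)
    obtain ⟨u, w, y, v, huw, huy, huv, hwy, hwv, hyv, auw, awy, ayv, hmem, hu, hv⟩ := hM1aug
    obtain ⟨hm2, hc2, hsat2⟩ := mg_augment hM1.1 auw ayv huy huv hwv hmem hu hv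
    set M2 := insert s(u, w) (insert s(y, v) (M1.erase s(w, y))) with hM2def
    have hmax2 : IsMaximalMatchingIn G M2 := by
      refine mg_maximal_iff.mpr ⟨hm2, fun a b hab => ?_⟩
      rcases (mg_maximal_iff.mp hM1).2 a b hab with hs | hs
      · exact Or.inl (hsat2 _ hs)
      · exact Or.inr (hsat2 _ hs)
    obtain ⟨M2', hM2', hM2'card, hM2'aug⟩ := mg_key hmax2 (by omega)
    have hfin := h M1 M2' hM1 hM2'
      ⟨u, w, y, v, huw, huy, huv, hwy, hwv, hyv, auw, awy, ayv, hmem, hu, hv⟩ hM2'aug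
    omega
end

section
/- Let G be a finite simple graph with n = |V(G)| vertices and let K(G) = (2G) ∗ K_{2n} be the join of the disjoint union of two copies of G with a complete graph on 2n vertices. Then μ(K(G)) = α(G), where α(G) is the independence number of G. -/
open SimpleGraph

variable {V : Type*}

noncomputable def ends {W : Type*} [DecidableEq W] (e : Sym2 W) : Finset W :=
  Sym2.lift ⟨fun a b => {a, b}, fun a b => Finset.pair_comm a b⟩ e

lemma mem_ends {W : Type*} [DecidableEq W] {e : Sym2 W} {v : W} : v ∈ ends e ↔ v ∈ e := by
  induction e using Sym2.ind with
  | _ a b => simp [ends, Sym2.mem_iff]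

lemma card_ends {W : Type*} [DecidableEq W] {e : Sym2 W} (h : ¬ e.IsDiag) :
    (ends e).card = 2 := by
  induction e using Sym2.ind with
  | _ a b =>
    simp only [Sym2.isDiag_iff_proj_eq] at h
    simp [ends, Finset.card_insert_of_notMem, h]

lemma isMaximal_of_sat {W : Type*} {K : SimpleGraph W} {M : Finset (Sym2 W)}
    (hM : IsMatchingIn K M) (h : ∀ a b, K.Adj a b → Sat M a ∨ Sat M b) :
    IsMaximalMatchingIn K M := by
  refine ⟨hM, fun M' hM' hsub => ?_⟩
  refine Finset.Subset.antisymm ?_ hsub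
  intro e he
  by_contra heM
  induction e using Sym2.ind with
  | _ a b =>
    have hadj : K.Adj a b := hM'.1 _ he
    rcases h a b hadj with ⟨f, hf, hvf⟩ | ⟨f, hf, hvf⟩
    · exact hM'.2 _ (hsub hf) _ he (fun hh => heM (hh ▸ hf)) a hvf (Sym2.mem_mk_left a b)
    · exact hM'.2 _ (hsub hf) _ he (fun hh => heM (hh ▸ hf)) b hvf (Sym2.mem_mk_right a b)

lemma sat_of_isMaximal {W : Type*} [DecidableEq W] {K : SimpleGraph W} {M : Finset (Sym2 W)}
    (h : IsMaximalMatchingIn K M) : ∀ a b, K.Adj a b → Sat M a ∨ Sat M b := by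
  intro a b hab
  by_contra hcon
  push_neg at hcon
  obtain ⟨ha, hb⟩ := hcon
  have hM' : IsMatchingIn K (insert s(a, b) M) := by
    constructor
    · intro e he
      rcases Finset.mem_insert.1 he with rfl | he
      · exact K.mem_edgeSet.2 hab
      · exact h.1.1 e he
    · intro e he f hf hef v hv hvf
      rcases Finset.mem_insert.1 he with rfl | heM
      · rcases Finset.mem_insert.1 hf with rfl | hfM
        · exact hef rfl
        · rcases Sym2.mem_iff.1 hv with rfl | rfl
          · exact ha ⟨f, hfM, hvf⟩
          · exact hb ⟨f, hfM, hvf⟩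
      · rcases Finset.mem_insert.1 hf with rfl | hfM
        · rcases Sym2.mem_iff.1 hvf with rfl | rfl
          · exact ha ⟨e, heM, hv⟩
          · exact hb ⟨e, heM, hv⟩
        · exact h.1.2 e heM f hfM hef v hv hvf
  have heq := h.2 _ hM' (Finset.subset_insert _ _)
  exact ha ⟨s(a, b), heq ▸ Finset.mem_insert_self _ _, Sym2.mem_mk_left a b⟩

lemma card_sat {W : Type*} [Fintype W] [DecidableEq W] {K : SimpleGraph W}
    {M : Finset (Sym2 W)} (hM : IsMatchingIn K M) [DecidablePred (Sat M)] :
    (Finset.univ.filter (fun w => Sat M w)).card = 2 * M.card := by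
  have heq : Finset.univ.filter (fun w => Sat M w) = M.biUnion ends := by
    ext v
    rw [Finset.mem_filter, Finset.mem_biUnion]
    simp [Sat, mem_ends]
  rw [heq, Finset.card_biUnion]
  · rw [Finset.sum_congr rfl (fun e he => card_ends (K.not_isDiag_of_mem_edgeSet (hM.1 e he)))]
    simp [Finset.sum_const, mul_comm]
  · intro e he f hf hef
    simp only [Finset.disjoint_left]
    intro v hv hv'
    exact hM.2 e he f hf hef v (mem_ends.1 hv) (mem_ends.1 hv')

/-- cross edge builder -/
def eMkF {A B : Type*} (h : A ≃ B) (x : A) : Sym2 (A ⊕ B) :=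
  s(Sum.inl x, Sum.inr (h x))

/-- clique edge builder -/
def e2F {V B : Type*} (h : (V ⊕ V) ≃ B) (s : V) : Sym2 ((V ⊕ V) ⊕ B) :=
  s(Sum.inr (h (Sum.inl s)), Sum.inr (h (Sum.inr s)))

lemma mem_eMkF {A B : Type*} {h : A ≃ B} {x : A} {v : A ⊕ B} :
    v ∈ eMkF h x ↔ v = Sum.inl x ∨ v = Sum.inr (h x) := Sym2.mem_iff

lemma mem_e2F {V B : Type*} {h : (V ⊕ V) ≃ B} {s : V} {v : (V ⊕ V) ⊕ B} :
    v ∈ e2F h s ↔ v = Sum.inr (h (Sum.inl s)) ∨ v = Sum.inr (h (Sum.inr s)) := Sym2.mem_iff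

lemma eMkF_inj {A B : Type*} (h : A ≃ B) : Function.Injective (eMkF h) := by
  intro x y hxy
  rw [eMkF, eMkF, Sym2.eq_iff] at hxy
  rcases hxy with ⟨h1, _⟩ | ⟨h1, _⟩
  · exact Sum.inl.inj h1
  · exact absurd h1 (by simp)

lemma e2F_inj {V B : Type*} (h : (V ⊕ V) ≃ B) : Function.Injective (e2F h) := by
  intro x y hxy
  rw [e2F, e2F, Sym2.eq_iff] at hxy
  rcases hxy with ⟨h1, h2⟩ | ⟨h1, h2⟩
  · exact Sum.inl.inj (h.injective (Sum.inr.inj h1))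
  · exact absurd (h.injective (Sum.inr.inj h1)) (by simp)

lemma eMkF_ne_e2F {A B : Type*} (h : (A ⊕ A) ≃ B) (x : A ⊕ A) (s : A) :
    eMkF h x ≠ e2F h s := by
  intro hxy
  rw [eMkF, e2F, Sym2.eq_iff] at hxy
  rcases hxy with ⟨h1, _⟩ | ⟨h1, _⟩ <;> exact absurd h1 (by simp)

lemma share_eMkF {A B : Type*} {h : A ≃ B} {x y : A} {v : A ⊕ B}
    (hv : v ∈ eMkF h x) (hv' : v ∈ eMkF h y) : x = y := by
  rw [mem_eMkF] at hv hv'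
  rcases hv with rfl | rfl <;> rcases hv' with h1 | h1
  · exact Sum.inl.inj h1
  · exact absurd h1 (by simp)
  · exact absurd h1 (by simp)
  · exact h.injective (Sum.inr.inj h1)

lemma share_e2F {A B : Type*} {h : (A ⊕ A) ≃ B} {s t : A} {v : (A ⊕ A) ⊕ B}
    (hv : v ∈ e2F h s) (hv' : v ∈ e2F h t) : s = t := by
  rw [mem_e2F] at hv hv'
  rcases hv with rfl | rfl <;> rcases hv' with h1 | h1 <;>
    · first
      | exact Sum.inl.inj (h.injective (Sum.inr.inj h1))
      | exact Sum.inr.inj (h.injective (Sum.inr.inj h1))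
      | exact absurd (h.injective (Sum.inr.inj h1)) (by simp)

lemma share_eMkF_e2F {A B : Type*} {h : (A ⊕ A) ≃ B} {x : A ⊕ A} {s : A}
    {v : (A ⊕ A) ⊕ B} (hv : v ∈ eMkF h x) (hv' : v ∈ e2F h s) :
    x = Sum.inl s ∨ x = Sum.inr s := by
  rw [mem_eMkF] at hv
  rw [mem_e2F] at hv'
  rcases hv with rfl | rfl <;> rcases hv' with h1 | h1
  · exact absurd h1 (by simp)
  · exact absurd h1 (by simp)
  · exact Or.inl (h.injective (Sum.inr.inj h1))
  · exact Or.inr (h.injective (Sum.inr.inj h1))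

/-- `S` is an independent set in `G`. -/
def IsIndepSet (G : SimpleGraph V) (S : Set V) : Prop :=
  ∀ u ∈ S, ∀ v ∈ S, u ≠ v → ¬ G.Adj u v

/-- The independence number `α(G)`. -/
noncomputable def indepNum (G : SimpleGraph V) : ℕ :=
  sSup {n | ∃ S : Set V, _root_.IsIndepSet G S ∧ S.ncard = n}

/-- The join `G₁ ∗ G₂` of two graphs: their disjoint union together with all
edges between the two sides. -/
def graphJoin {α β : Type*} (G₁ : SimpleGraph α) (G₂ : SimpleGraph β) :
    SimpleGraph (α ⊕ β) where
  Adj u v := (G₁ ⊕g G₂).Adj u v ∨ (u.isLeft ∧ v.isRight) ∨ (u.isRight ∧ v.isLeft)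
  symm := by
    refine ⟨?_⟩
    rintro u v (h | ⟨h1, h2⟩ | ⟨h1, h2⟩)
    · exact Or.inl ((G₁ ⊕g G₂).adj_symm h)
    · exact Or.inr (Or.inr ⟨h2, h1⟩)
    · exact Or.inr (Or.inl ⟨h2, h1⟩)
  loopless := by
    refine ⟨?_⟩
    rintro u (h | ⟨h1, h2⟩ | ⟨h1, h2⟩)
    · exact (G₁ ⊕g G₂).irrefl h
    · cases u <;> simp_all
    · cases u <;> simp_all

theorem stmt_7 {V : Type*} [Fintype V] (G : SimpleGraph V) :
    muGap (graphJoin (G ⊕g G) (⊤ : SimpleGraph (Fin (2 * Fintype.card V)))) =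
      _root_.indepNum G := by
  classical
  set n := Fintype.card V with hn
  set K := graphJoin (G ⊕g G) (⊤ : SimpleGraph (Fin (2 * n))) with hK
  have hcardW : Fintype.card ((V ⊕ V) ⊕ Fin (2 * n)) = 4 * n := by
    simp only [Fintype.card_sum, Fintype.card_fin, ← hn]
    omega
  -- independence number facts
  have hindep_bdd : ∀ S : Set V, _root_.IsIndepSet G S → S.ncard ≤ n := by
    intro S _
    calc S.ncard ≤ (Set.univ : Set V).ncard :=
          Set.ncard_le_ncard (Set.subset_univ S) Set.finite_univ
      _ = n := by rw [Set.ncard_univ, Nat.card_eq_fintype_card]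
  have hBdd : BddAbove {k | ∃ S : Set V, _root_.IsIndepSet G S ∧ S.ncard = k} := by
    refine ⟨n, ?_⟩
    rintro k ⟨S, hS, rfl⟩
    exact hindep_bdd S hS
  have hne : {k | ∃ S : Set V, _root_.IsIndepSet G S ∧ S.ncard = k}.Nonempty :=
    ⟨0, ∅, fun u hu => absurd hu (Set.notMem_empty u), by simp⟩
  set α := _root_.indepNum G with hα
  obtain ⟨S, hSindep, hScard⟩ :
      ∃ S : Set V, _root_.IsIndepSet G S ∧ S.ncard = α := Nat.sSup_mem hne hBdd
  have hindep_le : ∀ T : Set V, _root_.IsIndepSet G T → T.ncard ≤ α := fun T hT =>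
    le_csSup hBdd ⟨T, hT, rfl⟩
  have hαn : α ≤ n := hScard ▸ hindep_bdd S hSindep
  -- adjacency facts for K
  have adj_lr : ∀ (a : V ⊕ V) (b : Fin (2 * n)), K.Adj (Sum.inl a) (Sum.inr b) := by
    intro a b
    exact Or.inr (Or.inl ⟨rfl, rfl⟩)
  have adj_rr : ∀ (a b : Fin (2 * n)), a ≠ b → K.Adj (Sum.inr a) (Sum.inr b) := by
    intro a b hab
    exact Or.inl hab
  have adj_ll : ∀ (a b : V ⊕ V), K.Adj (Sum.inl a) (Sum.inl b) → (G ⊕g G).Adj a b := by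
    rintro a b (h | ⟨h1, h2⟩ | ⟨h1, h2⟩)
    · exact h
    · simp at h2
    · simp at h1
  -- the auxiliary equivalence
  set hvv : (V ⊕ V) ≃ Fin (2 * n) :=
    (Equiv.sumCongr (Fintype.equivFin V) (Fintype.equivFin V)).trans
      (finSumFinEquiv.trans (finCongr (two_mul n).symm)) with hhvv
  -- ν(K) = 2n : the perfect matching
  set Mν : Finset (Sym2 ((V ⊕ V) ⊕ Fin (2 * n))) := Finset.univ.image (eMkF hvv) with hMνdef
  have hMν : IsMatchingIn K Mν := by
    constructor
    · intro e he
      simp only [hMνdef, Finset.mem_image] at he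
      obtain ⟨x, _, rfl⟩ := he
      exact K.mem_edgeSet.2 (adj_lr x (hvv x))
    · intro e he f hf hef v hv hvf
      simp only [hMνdef, Finset.mem_image] at he hf
      obtain ⟨x, _, rfl⟩ := he
      obtain ⟨y, _, rfl⟩ := hf
      exact hef (by rw [share_eMkF hv hvf])
  have hMνcard : Mν.card = 2 * n := by
    rw [hMνdef, Finset.card_image_of_injective _ (eMkF_inj hvv), Finset.card_univ,
      Fintype.card_sum, ← hn, two_mul]
  -- upper bound for matchings
  have hM_ub : ∀ M : Finset (Sym2 ((V ⊕ V) ⊕ Fin (2 * n))),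
      IsMatchingIn K M → M.card ≤ 2 * n := by
    intro M hM
    have h1 := card_sat hM
    have h2 : (Finset.univ.filter (fun w => Sat M w)).card ≤ 4 * n := by
      rw [← hcardW, ← Finset.card_univ]
      exact Finset.card_filter_le _ _
    omega
  have hν : nuNum K = 2 * n := by
    rw [show nuNum K = sSup {k | ∃ M, IsMatchingIn K M ∧ M.card = k} from rfl]
    apply le_antisymm
    · refine csSup_le ⟨0, ∅, ⟨fun e he => absurd he (Finset.notMem_empty e),
        fun e he => absurd he (Finset.notMem_empty e)⟩, Finset.card_empty⟩ ?_
      rintro k ⟨M, hM, rfl⟩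
      exact hM_ub M hM
    · refine le_csSup ⟨2 * n, ?_⟩ ⟨Mν, hMν, hMνcard⟩
      rintro k ⟨M, hM, rfl⟩
      exact hM_ub M hM
  -- the β matching
  have hSfin : S.Finite := S.toFinite
  set Sfin : Finset V := hSfin.toFinset with hSfdef
  have hSfin_mem : ∀ v, v ∈ Sfin ↔ v ∈ S := fun v => Set.Finite.mem_toFinset hSfin
  have hSfin_card : Sfin.card = α := by
    rw [← hScard, Set.ncard_eq_toFinset_card S hSfin]
  set C : Finset V := Sfinᶜ with hCdef
  have hCcard : C.card = n - α := by
    rw [hCdef, Finset.card_compl, hSfin_card, ← hn]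
  set Mβ : Finset (Sym2 ((V ⊕ V) ⊕ Fin (2 * n))) :=
    ((C.disjSum C).image (eMkF hvv)) ∪ (Sfin.image (e2F hvv)) with hMβdef
  have hMβ_disj : Disjoint ((C.disjSum C).image (eMkF hvv)) (Sfin.image (e2F hvv)) := by
    simp only [Finset.disjoint_left, Finset.mem_image]
    rintro e ⟨x, _, rfl⟩ ⟨s, _, he⟩
    exact eMkF_ne_e2F hvv x s he.symm
  have hMβcard : Mβ.card = 2 * n - α := by
    rw [hMβdef, Finset.card_union_of_disjoint hMβ_disj,
      Finset.card_image_of_injective _ (eMkF_inj hvv),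
      Finset.card_image_of_injective _ (e2F_inj hvv),
      Finset.card_disjSum, hCcard, hSfin_card]
    omega
  have hMβmatch : IsMatchingIn K Mβ := by
    constructor
    · intro e he
      rw [hMβdef, Finset.mem_union] at he
      rcases he with he | he <;> simp only [Finset.mem_image] at he
      · obtain ⟨x, _, rfl⟩ := he
        exact K.mem_edgeSet.2 (adj_lr x (hvv x))
      · obtain ⟨s, _, rfl⟩ := he
        refine K.mem_edgeSet.2 (adj_rr _ _ ?_)
        simp [hvv.injective.eq_iff]
    · intro e he f hf hef v hv hvf
      rw [hMβdef, Finset.mem_union] at he hf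
      rcases he with he | he <;> rcases hf with hf | hf <;>
        simp only [Finset.mem_image] at he hf
      · obtain ⟨x, hx, rfl⟩ := he
        obtain ⟨y, hy, rfl⟩ := hf
        exact hef (by rw [share_eMkF hv hvf])
      · obtain ⟨x, hx, rfl⟩ := he
        obtain ⟨s, hs, rfl⟩ := hf
        rcases share_eMkF_e2F hv hvf with rfl | rfl
        · rw [Finset.inl_mem_disjSum, hCdef, Finset.mem_compl] at hx
          exact hx hs
        · rw [Finset.inr_mem_disjSum, hCdef, Finset.mem_compl] at hx
          exact hx hs
      · obtain ⟨s, hs, rfl⟩ := he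
        obtain ⟨x, hx, rfl⟩ := hf
        rcases share_eMkF_e2F hvf hv with rfl | rfl
        · rw [Finset.inl_mem_disjSum, hCdef, Finset.mem_compl] at hx
          exact hx hs
        · rw [Finset.inr_mem_disjSum, hCdef, Finset.mem_compl] at hx
          exact hx hs
      · obtain ⟨s, hs, rfl⟩ := he
        obtain ⟨t, ht, rfl⟩ := hf
        exact hef (by rw [share_e2F hv hvf])
  have satMβ : ∀ w : (V ⊕ V) ⊕ Fin (2 * n), ¬ Sat Mβ w →
      ∃ u ∈ S, w = Sum.inl (Sum.inl u) ∨ w = Sum.inl (Sum.inr u) := by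
    intro w hw
    have hsatx : ∀ x : V ⊕ V, x ∈ C.disjSum C → ∀ v, v ∈ eMkF hvv x → Sat Mβ v :=
      fun x hx v hv =>
        ⟨eMkF hvv x, Finset.mem_union_left _ (Finset.mem_image_of_mem _ hx), hv⟩
    have hsats : ∀ s ∈ Sfin, ∀ v, v ∈ e2F hvv s → Sat Mβ v :=
      fun s hs v hv =>
        ⟨e2F hvv s, Finset.mem_union_right _ (Finset.mem_image_of_mem _ hs), hv⟩
    have hclass : ∀ x : V ⊕ V,
        x ∈ C.disjSum C ∨ (∃ u ∈ Sfin, x = Sum.inl u ∨ x = Sum.inr u) := by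
      intro x
      match x with
      | Sum.inl u =>
        by_cases hu : u ∈ Sfin
        · exact Or.inr ⟨u, hu, Or.inl rfl⟩
        · exact Or.inl (Finset.inl_mem_disjSum.2 (Finset.mem_compl.2 hu))
      | Sum.inr u =>
        by_cases hu : u ∈ Sfin
        · exact Or.inr ⟨u, hu, Or.inr rfl⟩
        · exact Or.inl (Finset.inr_mem_disjSum.2 (Finset.mem_compl.2 hu))
    match w with
    | Sum.inr c =>
      exfalso
      apply hw
      obtain hx | ⟨u, hu, hx⟩ := hclass (hvv.symm c)
      · exact hsatx _ hx _ (mem_eMkF.2 (Or.inr (by rw [Equiv.apply_symm_apply])))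
      · refine hsats u hu _ (mem_e2F.2 ?_)
        rcases hx with hx | hx
        · exact Or.inl (by rw [← hx, Equiv.apply_symm_apply])
        · exact Or.inr (by rw [← hx, Equiv.apply_symm_apply])
    | Sum.inl x =>
      obtain hx | ⟨u, hu, hx⟩ := hclass x
      · exact absurd (hsatx _ hx _ (mem_eMkF.2 (Or.inl rfl))) hw
      · refine ⟨u, (hSfin_mem u).1 hu, ?_⟩
        rcases hx with rfl | rfl
        · exact Or.inl rfl
        · exact Or.inr rfl
  have hMβmax : IsMaximalMatchingIn K Mβ := by
    refine isMaximal_of_sat hMβmatch ?_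
    intro a b hab
    by_contra hcon
    push_neg at hcon
    obtain ⟨ha, hb⟩ := hcon
    obtain ⟨u, huS, hu⟩ := satMβ a ha
    obtain ⟨w, hwS, hw⟩ := satMβ b hb
    rcases hu with rfl | rfl <;> rcases hw with rfl | rfl
    · have hadj := adj_ll _ _ hab
      exact hSindep u huS w hwS (fun h => by subst h; exact (G.irrefl hadj)) hadj
    · have hadj := adj_ll _ _ hab
      simp at hadj
    · have hadj := adj_ll _ _ hab
      simp at hadj
    · have hadj := adj_ll _ _ hab
      exact hSindep u huS w hwS (fun h => by subst h; exact (G.irrefl hadj)) hadj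
  -- lower bound for maximal matchings
  have hβ_lb : ∀ M, IsMaximalMatchingIn K M → 2 * n - α ≤ M.card := by
    intro M hMmax
    have hMm := hMmax.1
    have hsat := sat_of_isMaximal hMmax
    have h1 := card_sat hMm
    have h2 : (Finset.univ.filter (fun w => Sat M w)).card +
        (Finset.univ.filter (fun w => ¬ Sat M w)).card = 4 * n := by
      rw [Finset.card_filter_add_card_filter_not, Finset.card_univ, hcardW]
    set U := Finset.univ.filter (fun w => ¬ Sat M w) with hU
    by_cases hex : ∃ c : Fin (2 * n), ¬ Sat M (Sum.inr c)
    · exfalso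
      obtain ⟨c, hc⟩ := hex
      have hsub : U ⊆ {Sum.inr c} := by
        intro w hwU
        rw [hU, Finset.mem_filter] at hwU
        rw [Finset.mem_singleton]
        by_contra hne
        have hadj : K.Adj (Sum.inr c) w := by
          match w with
          | Sum.inl x => exact (adj_lr x c).symm
          | Sum.inr c' => exact adj_rr c c' (fun h => hne (by rw [h]))
        rcases hsat _ _ hadj with h | h
        · exact hc h
        · exact hwU.2 h
      have hUcard : U.card ≤ 1 := le_trans (Finset.card_le_card hsub) (by simp)
      have hUpos : (Sum.inr c : (V ⊕ V) ⊕ Fin (2 * n)) ∈ U := by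
        rw [hU, Finset.mem_filter]
        exact ⟨Finset.mem_univ _, hc⟩
      have hU1 : U.card = 1 := le_antisymm hUcard (Finset.card_pos.2 ⟨_, hUpos⟩)
      omega
    · push_neg at hex
      set S1 := Finset.univ.filter (fun v : V => ¬ Sat M (Sum.inl (Sum.inl v))) with hS1
      set S2 := Finset.univ.filter (fun v : V => ¬ Sat M (Sum.inl (Sum.inr v))) with hS2
      have hUeq : U = S1.image (fun v => Sum.inl (Sum.inl v)) ∪
          S2.image (fun v => Sum.inl (Sum.inr v)) := by
        ext w
        rw [hU, Finset.mem_filter, Finset.mem_union]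
        constructor
        · rintro ⟨-, hw⟩
          match w with
          | Sum.inr c => exact absurd (hex c) hw
          | Sum.inl (Sum.inl v) =>
            exact Or.inl (Finset.mem_image_of_mem _
              (by rw [hS1, Finset.mem_filter]; exact ⟨Finset.mem_univ _, hw⟩))
          | Sum.inl (Sum.inr v) =>
            exact Or.inr (Finset.mem_image_of_mem _
              (by rw [hS2, Finset.mem_filter]; exact ⟨Finset.mem_univ _, hw⟩))
        · rintro (hw | hw) <;> simp only [Finset.mem_image] at hw
          · obtain ⟨v, hv, rfl⟩ := hw
            rw [hS1, Finset.mem_filter] at hv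
            exact ⟨Finset.mem_univ _, hv.2⟩
          · obtain ⟨v, hv, rfl⟩ := hw
            rw [hS2, Finset.mem_filter] at hv
            exact ⟨Finset.mem_univ _, hv.2⟩
      have hi1 : Function.Injective
          (fun v : V => (Sum.inl (Sum.inl v) : (V ⊕ V) ⊕ Fin (2 * n))) :=
        fun x y h => by simpa using h
      have hi2 : Function.Injective
          (fun v : V => (Sum.inl (Sum.inr v) : (V ⊕ V) ⊕ Fin (2 * n))) :=
        fun x y h => by simpa using h
      have hdisj : Disjoint (S1.image (fun v => (Sum.inl (Sum.inl v) : (V ⊕ V) ⊕ Fin (2 * n))))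
          (S2.image (fun v => Sum.inl (Sum.inr v))) := by
        simp only [Finset.disjoint_left, Finset.mem_image]
        rintro e ⟨x, _, rfl⟩ ⟨y, _, he⟩
        simp at he
      have hUcard : U.card = S1.card + S2.card := by
        rw [hUeq, Finset.card_union_of_disjoint hdisj,
          Finset.card_image_of_injective _ hi1, Finset.card_image_of_injective _ hi2]
      have hS1ind : _root_.IsIndepSet G (↑S1 : Set V) := by
        intro u hu v hv huv hadj
        have hKadj : K.Adj (Sum.inl (Sum.inl u)) (Sum.inl (Sum.inl v)) := Or.inl hadj
        rw [Finset.mem_coe, hS1, Finset.mem_filter] at hu hv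
        rcases hsat _ _ hKadj with h | h
        · exact hu.2 h
        · exact hv.2 h
      have hS2ind : _root_.IsIndepSet G (↑S2 : Set V) := by
        intro u hu v hv huv hadj
        have hKadj : K.Adj (Sum.inl (Sum.inr u)) (Sum.inl (Sum.inr v)) := Or.inl hadj
        rw [Finset.mem_coe, hS2, Finset.mem_filter] at hu hv
        rcases hsat _ _ hKadj with h | h
        · exact hu.2 h
        · exact hv.2 h
      have hS1le : S1.card ≤ α := by
        have := hindep_le _ hS1ind
        rwa [Set.ncard_coe_finset] at this
      have hS2le : S2.card ≤ α := by
        have := hindep_le _ hS2ind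
        rwa [Set.ncard_coe_finset] at this
      omega
  have hβ : betaNum K = 2 * n - α := by
    rw [show betaNum K = sInf {k | ∃ M, IsMaximalMatchingIn K M ∧ M.card = k} from rfl]
    apply le_antisymm
    · exact Nat.sInf_le ⟨Mβ, hMβmax, hMβcard⟩
    · refine le_csInf ⟨_, Mβ, hMβmax, rfl⟩ ?_
      rintro k ⟨M, hM, rfl⟩
      exact hβ_lb M hM
  rw [show muGap K = nuNum K - betaNum K from rfl, hν, hβ]
  omega
end
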